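/- arXiv:2411.11037 — 4 statements merged into one kernel-verified Lean document; each statement's English description precedes it below -/
import Mathlib

section
/- Let a,b>0, 3/2<p<3, p+2p^2/3<q<3p/(3-p), A≥0, B>0. Define h(t) = (a/p)t^p A + (b/(2p))t^{2p} A^2 - (1/q) t^{3(q-p)/p} B for t>0, where A>0. Then h has a unique critical point t_0 >0 on (0,∞), which is its global maximum; moreover t_0 < 1 if and only if a A + b A^2 - (3(q-p)/(pq)) B < 0, and t_0 = 1 if and only if a A + b A^2 - (3(q-p)/(pq)) B = 0. -/
open Real Set Filter
noncomputable section

lemma stmt4_deriv (a b p q A B : ℝ) (hp : p ≠ 0) (hq : q ≠ 0) {t : ℝ} (ht : 0 < t) :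
    HasDerivAt (fun t : ℝ => a/p * t^p * A + b/(2*p) * t^(2*p) * A^2 - 1/q * t^(3*(q-p)/p) * B)
      (t^(3*(q-p)/p - 1) * (a*A*t^(p - 3*(q-p)/p) + b*A^2*t^(2*p - 3*(q-p)/p)
        - 3*(q-p)/(p*q)*B)) t := by
  have h1 := Real.hasDerivAt_rpow_const (x := t) (p := p) (Or.inl ht.ne')
  have h2 := Real.hasDerivAt_rpow_const (x := t) (p := 2*p) (Or.inl ht.ne')
  have h3 := Real.hasDerivAt_rpow_const (x := t) (p := 3*(q-p)/p) (Or.inl ht.ne')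
  have H := (((h1.const_mul (a/p)).mul_const A).add
    ((h2.const_mul (b/(2*p))).mul_const (A^2))).sub ((h3.const_mul (1/q)).mul_const B)
  refine H.congr_deriv ?_
  have hX : t ^ (3*(q-p)/p - 1) ≠ 0 := (Real.rpow_pos_of_pos ht _).ne'
  have e1 : t ^ (p - 3*(q-p)/p) = t^(p-1) * (t^(3*(q-p)/p - 1))⁻¹ := by
    rw [← Real.rpow_neg ht.le, ← Real.rpow_add ht]
    congr 1; ring
  have e2 : t ^ (2*p - 3*(q-p)/p) = t^(2*p-1) * (t^(3*(q-p)/p - 1))⁻¹ := by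
    rw [← Real.rpow_neg ht.le, ← Real.rpow_add ht]
    congr 1; ring
  rw [e1, e2]
  field_simp

theorem stmt4 (a b p q A B : ℝ) (ha : 0 < a) (hb : 0 < b)
    (hp1 : 3/2 < p) (hp2 : p < 3) (hq1 : p + 2*p^2/3 < q) (hq2 : q < 3*p/(3-p))
    (hA : 0 < A) (hB : 0 < B) :
    let h : ℝ → ℝ := fun t => a/p * t^p * A + b/(2*p) * t^(2*p) * A^2
      - 1/q * t^(3*(q-p)/p) * B
    ∃ t0 : ℝ, 0 < t0 ∧ deriv h t0 = 0 ∧ (∀ s, 0 < s → deriv h s = 0 → s = t0) ∧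
      (∀ t, 0 < t → h t ≤ h t0) ∧
      (t0 < 1 ↔ a*A + b*A^2 - (3*(q-p)/(p*q))*B < 0) ∧
      (t0 = 1 ↔ a*A + b*A^2 - (3*(q-p)/(p*q))*B = 0) := by
  intro h
  have hp0 : 0 < p := by linarith
  have hqp : p < q := by nlinarith
  have hq0 : 0 < q := lt_trans hp0 hqp
  set r : ℝ := 3*(q-p)/p with hrdef
  set c : ℝ := 3*(q-p)/(p*q)*B with hcdef
  have hr2p : 2*p < r := by
    rw [hrdef, lt_div_iff₀ hp0]; nlinarith
  have hc : 0 < c := by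
    apply mul_pos (div_pos (by linarith) (mul_pos hp0 hq0)) hB
  have hpr : p - r < 0 := by linarith
  have h2pr : 2*p - r < 0 := by linarith
  have hr1 : (0:ℝ) < r - 1 := by linarith
  set g : ℝ → ℝ := fun t => a*A*t^(p-r) + b*A^2*t^(2*p-r) - c with hgdef
  -- g is strictly decreasing on (0,∞)
  have hganti : StrictAntiOn g (Ioi 0) := by
    intro x hx y hy hxy
    have h1 := Real.rpow_lt_rpow_of_neg hx hxy hpr
    have h2 := Real.rpow_lt_rpow_of_neg hx hxy h2pr
    have t1 := mul_lt_mul_of_pos_left h1 (mul_pos ha hA)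
    have t2 := mul_lt_mul_of_pos_left h2 (mul_pos hb (pow_pos hA 2))
    simp only [hgdef]
    linarith
  -- continuity of g
  have hgc : ContinuousOn g (Ioi 0) := by
    apply ContinuousOn.sub _ continuousOn_const
    apply ContinuousOn.add
    · exact continuousOn_const.mul (continuousOn_id.rpow_const fun x hx => Or.inl (ne_of_gt hx))
    · exact continuousOn_const.mul (continuousOn_id.rpow_const fun x hx => Or.inl (ne_of_gt hx))
  -- a point where g > 0
  have haA : 0 < a*A := mul_pos ha hA
  have hbA : 0 < b*A^2 := mul_pos hb (pow_pos hA 2)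
  set K : ℝ := (c/(a*A))^(1/(p-r)) with hKdef
  have hK : 0 < K := Real.rpow_pos_of_pos (div_pos hc haA) _
  set x1 : ℝ := min 1 K with hx1def
  have hx1 : 0 < x1 := lt_min one_pos hK
  have hx1K : x1 ≤ K := min_le_right _ _
  have hKpow : K^(p-r) = c/(a*A) := by
    rw [hKdef, ← Real.rpow_mul (div_pos hc haA).le, one_div, inv_mul_cancel₀ hpr.ne,
      Real.rpow_one]
  have hgx1 : 0 < g x1 := by
    have h1 : K^(p-r) ≤ x1^(p-r) := Real.rpow_le_rpow_of_nonpos hx1 hx1K hpr.le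
    have h2 : c ≤ a*A*x1^(p-r) := by
      calc c = a*A*(c/(a*A)) := by field_simp
        _ = a*A*K^(p-r) := by rw [hKpow]
        _ ≤ a*A*x1^(p-r) := mul_le_mul_of_nonneg_left h1 haA.le
    have h3 : 0 < b*A^2*x1^(2*p-r) := mul_pos hbA (Real.rpow_pos_of_pos hx1 _)
    simp only [hgdef]
    linarith
  -- a point where g < 0
  set K1 : ℝ := (c/(2*(a*A)))^(1/(p-r)) with hK1def
  set K2 : ℝ := (c/(2*(b*A^2)))^(1/(2*p-r)) with hK2def
  have hK1 : 0 < K1 := Real.rpow_pos_of_pos (div_pos hc (by linarith)) _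
  have hK2 : 0 < K2 := Real.rpow_pos_of_pos (div_pos hc (by linarith)) _
  set x2 : ℝ := max x1 (max K1 K2) + 1 with hx2def
  have hx2gtK1 : K1 < x2 := by
    have := le_max_left K1 K2
    have := le_max_right x1 (max K1 K2)
    linarith
  have hx2gtK2 : K2 < x2 := by
    have := le_max_right K1 K2
    have := le_max_right x1 (max K1 K2)
    linarith
  have hx1x2 : x1 ≤ x2 := by
    have := le_max_left x1 (max K1 K2)
    linarith
  have hx2 : 0 < x2 := lt_of_lt_of_le hx1 hx1x2
  have hK1pow : K1^(p-r) = c/(2*(a*A)) := by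
    rw [hK1def, ← Real.rpow_mul (div_pos hc (by linarith : (0:ℝ) < 2*(a*A))).le, one_div,
      inv_mul_cancel₀ hpr.ne, Real.rpow_one]
  have hK2pow : K2^(2*p-r) = c/(2*(b*A^2)) := by
    rw [hK2def, ← Real.rpow_mul (div_pos hc (by linarith : (0:ℝ) < 2*(b*A^2))).le, one_div,
      inv_mul_cancel₀ h2pr.ne, Real.rpow_one]
  have hgx2 : g x2 < 0 := by
    have h1 : x2^(p-r) < K1^(p-r) := Real.rpow_lt_rpow_of_neg hK1 hx2gtK1 hpr
    have h2 : x2^(2*p-r) < K2^(2*p-r) := Real.rpow_lt_rpow_of_neg hK2 hx2gtK2 h2pr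
    rw [hK1pow] at h1
    rw [hK2pow] at h2
    have t1 : a*A*x2^(p-r) < a*A*(c/(2*(a*A))) := mul_lt_mul_of_pos_left h1 haA
    have t2 : b*A^2*x2^(2*p-r) < b*A^2*(c/(2*(b*A^2))) := mul_lt_mul_of_pos_left h2 hbA
    have e1 : a*A*(c/(2*(a*A))) = c/2 := by field_simp
    have e2 : b*A^2*(c/(2*(b*A^2))) = c/2 := by field_simp
    simp only [hgdef]
    rw [e1] at t1; rw [e2] at t2
    linarith
  -- intermediate value: a zero of g
  have hsub : Icc x1 x2 ⊆ Ioi 0 := fun x hx => lt_of_lt_of_le hx1 hx.1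
  have hIVT := intermediate_value_Icc' hx1x2 (hgc.mono hsub)
  have h0mem : (0:ℝ) ∈ Icc (g x2) (g x1) := ⟨hgx2.le, hgx1.le⟩
  obtain ⟨t0, ht0mem, hgt0⟩ := hIVT h0mem
  have ht0 : 0 < t0 := lt_of_lt_of_le hx1 ht0mem.1
  have ht0' : t0 ∈ Ioi (0:ℝ) := Set.mem_Ioi.mpr ht0
  -- derivative formula
  have hderiv : ∀ s : ℝ, 0 < s → deriv h s = s^(r-1) * g s := by
    intro s hs
    have := (stmt4_deriv a b p q A B hp0.ne' hq0.ne' hs).deriv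
    simpa only [hgdef, hrdef, hcdef] using this
  -- global max on (0,∞)
  have hgpos : ∀ s : ℝ, 0 < s → s < t0 → 0 < g s := by
    intro s hs hst
    have := hganti hs ht0' hst
    rw [hgt0] at this; exact this
  have hgneg : ∀ s : ℝ, t0 < s → g s < 0 := by
    intro s hst
    have := hganti ht0' (lt_trans ht0 hst) hst
    rw [hgt0] at this; exact this
  have hcont : ∀ u v : ℝ, 0 < u → ContinuousOn h (Icc u v) := by
    intro u v hu
    apply ContinuousOn.sub
    · apply ContinuousOn.add
      · exact (continuousOn_const.mul (continuousOn_id.rpow_const fun x hx =>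
          Or.inl (ne_of_gt (lt_of_lt_of_le hu hx.1)))).mul continuousOn_const
      · exact (continuousOn_const.mul (continuousOn_id.rpow_const fun x hx =>
          Or.inl (ne_of_gt (lt_of_lt_of_le hu hx.1)))).mul continuousOn_const
    · exact (continuousOn_const.mul (continuousOn_id.rpow_const fun x hx =>
        Or.inl (ne_of_gt (lt_of_lt_of_le hu hx.1)))).mul continuousOn_const
  have hmax : ∀ t, 0 < t → h t ≤ h t0 := by
    intro t ht
    rcases lt_trichotomy t t0 with hlt | heq | hgt
    · have hmono : StrictMonoOn h (Icc t t0) := by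
        apply strictMonoOn_of_deriv_pos (convex_Icc t t0) (hcont t t0 ht)
        intro s hs
        rw [interior_Icc] at hs
        have hs0 : 0 < s := lt_trans ht hs.1
        rw [hderiv s hs0]
        exact mul_pos (Real.rpow_pos_of_pos hs0 _) (hgpos s hs0 hs.2)
      exact (hmono ⟨le_refl t, hlt.le⟩ ⟨hlt.le, le_refl t0⟩ hlt).le
    · rw [heq]
    · have hanti : StrictAntiOn h (Icc t0 t) := by
        apply strictAntiOn_of_deriv_neg (convex_Icc t0 t) (hcont t0 t ht0)
        intro s hs
        rw [interior_Icc] at hs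
        have hs0 : 0 < s := lt_trans ht0 hs.1
        rw [hderiv s hs0]
        exact mul_neg_of_pos_of_neg (Real.rpow_pos_of_pos hs0 _) (hgneg s hs.1)
      exact (hanti ⟨le_refl t0, hgt.le⟩ ⟨hgt.le, le_refl t⟩ hgt).le
  have huniq : ∀ s, 0 < s → deriv h s = 0 → s = t0 := by
    intro s hs hds
    rw [hderiv s hs] at hds
    have : g s = 0 := by
      rcases mul_eq_zero.mp hds with h' | h'
      · exact absurd h' (Real.rpow_pos_of_pos hs _).ne'
      · exact h'
    exact hganti.injOn hs ht0' (this.trans hgt0.symm)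
  have hg1 : g 1 = a*A + b*A^2 - (3*(q-p)/(p*q))*B := by
    simp only [hgdef, Real.one_rpow, mul_one, hcdef]
  have h1mem : (1:ℝ) ∈ Ioi (0:ℝ) := Set.mem_Ioi.mpr one_pos
  refine ⟨t0, ht0, ?_, huniq, hmax, ?_, ?_⟩
  · rw [hderiv t0 ht0, hgt0, mul_zero]
  · constructor
    · intro hlt
      have := hganti ht0' h1mem hlt
      rw [hgt0, hg1] at this
      exact this
    · intro hlt
      rw [← hg1] at hlt
      by_contra hcon
      push_neg at hcon
      rcases eq_or_lt_of_le hcon with heq | hlt'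
      · rw [heq, hgt0] at hlt; exact lt_irrefl 0 hlt
      · have := hganti h1mem ht0' hlt'
        rw [hgt0] at this; linarith
  · constructor
    · intro heq; rw [← hg1, ← heq]; exact hgt0
    · intro heq
      rw [← hg1] at heq
      exact hganti.injOn ht0' h1mem (hgt0.trans heq.symm)
end
end

section
/- Let 3/2<p<3, a,b>0, q = p+2p^2/3, and suppose c > (b|Q|_p^{2p^2/3}/2)^{3/(2p^2-3p)}. Then i(c) = -∞, i.e., the energy I(u) = (a/p)|∇u|_p^p + (b/(2p))|∇u|_p^{2p} - (1/q)|u|_q^q is unbounded below on the constraint S(c) = {u ∈ W^{1,p}(ℝ^3) : |u|_p = c}. -/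
open MeasureTheory Real Set Filter

noncomputable section

abbrev E3 := EuclideanSpace ℝ (Fin 3)

def gradPow (p : ℝ) (u : E3 → ℝ) : ℝ := ∫ x : E3, ‖fderiv ℝ u x‖ ^ p
def lpPow (s : ℝ) (u : E3 → ℝ) : ℝ := ∫ x : E3, |u x| ^ s
def Wmem (p : ℝ) (u : E3 → ℝ) : Prop :=
  Differentiable ℝ u ∧ MeasureTheory.Integrable (fun x : E3 => |u x| ^ p) ∧
    MeasureTheory.Integrable (fun x : E3 => ‖fderiv ℝ u x‖ ^ p)
def Ifun (a b p q : ℝ) (u : E3 → ℝ) : ℝ :=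
  a / p * gradPow p u + b / (2 * p) * (gradPow p u) ^ 2 - 1 / q * lpPow q u
def Sset (p c : ℝ) : Set (E3 → ℝ) := {u | Wmem p u ∧ lpPow p u = c ^ p}
def ifun (a b p q c : ℝ) : ℝ := sInf (Ifun a b p q '' Sset p c)

lemma lpPow_scale (s t K : ℝ) (ht : 0 < t) (Q : E3 → ℝ) :
    lpPow s (fun x => K * Q (t • x)) = |K| ^ s * (t ^ 3)⁻¹ * lpPow s Q := by
  unfold lpPow
  have h1 : ∀ x : E3, |K * Q (t • x)| ^ s = |K| ^ s * |Q (t • x)| ^ s := fun x => by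
    rw [abs_mul, Real.mul_rpow (abs_nonneg _) (abs_nonneg _)]
  simp_rw [h1]
  rw [integral_const_mul]
  have h2 := MeasureTheory.Measure.integral_comp_smul (volume : Measure E3)
    (fun y => |Q y| ^ s) t
  rw [h2, finrank_euclideanSpace_fin, smul_eq_mul,
    abs_of_nonneg (inv_nonneg.2 (pow_nonneg ht.le _))]
  ring

lemma fderiv_scale (t K : ℝ) (Q : E3 → ℝ) (hQd : Differentiable ℝ Q) (x : E3) :
    fderiv ℝ (fun x : E3 => K * Q (t • x)) x = (K * t) • fderiv ℝ Q (t • x) := by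
  have h1 : HasFDerivAt (fun x : E3 => t • x) (t • ContinuousLinearMap.id ℝ E3) x := by
    exact (hasFDerivAt_id x).const_smul t
  have h2 : HasFDerivAt Q (fderiv ℝ Q (t • x)) (t • x) := (hQd (t • x)).hasFDerivAt
  have h3 : HasFDerivAt (fun x : E3 => K * Q (t • x))
      (K • (fderiv ℝ Q (t • x)).comp (t • ContinuousLinearMap.id ℝ E3)) x := by
    have := (h2.comp x h1).const_mul K
    exact this
  rw [h3.fderiv]
  ext v
  simp only [ContinuousLinearMap.smul_apply, ContinuousLinearMap.coe_comp',
    Function.comp_apply, ContinuousLinearMap.coe_id', id_eq,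
    (fderiv ℝ Q (t • x)).map_smul, smul_smul]

lemma gradPow_scale (p t K : ℝ) (ht : 0 < t) (Q : E3 → ℝ) (hQd : Differentiable ℝ Q) :
    gradPow p (fun x => K * Q (t • x)) = |K * t| ^ p * (t ^ 3)⁻¹ * gradPow p Q := by
  unfold gradPow
  have h1 : ∀ x : E3, ‖fderiv ℝ (fun x : E3 => K * Q (t • x)) x‖ ^ p
      = |K * t| ^ p * ‖fderiv ℝ Q (t • x)‖ ^ p := fun x => by
    rw [fderiv_scale t K Q hQd, norm_smul, Real.norm_eq_abs,
      Real.mul_rpow (abs_nonneg _) (norm_nonneg _)]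
  simp_rw [h1]
  rw [integral_const_mul]
  have h2 := MeasureTheory.Measure.integral_comp_smul (volume : Measure E3)
    (fun y => ‖fderiv ℝ Q y‖ ^ p) t
  rw [h2, finrank_euclideanSpace_fin, smul_eq_mul,
    abs_of_nonneg (inv_nonneg.2 (pow_nonneg ht.le _))]
  ring

set_option maxHeartbeats 1000000 in
theorem stmt8 (a b p q c : ℝ) (Q : E3 → ℝ) (ha : 0 < a) (hb : 0 < b)
    (hp1 : 3/2 < p) (hp2 : p < 3) (hq : q = p + 2*p^2/3)
    (hQ : Wmem p Q) (hQpos : 0 < lpPow p Q)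
    (hQgrad : gradPow p Q = lpPow p Q)
    (hQq : lpPow q Q = q/p * lpPow p Q)
    (hc : (b * ((lpPow p Q) ^ (1/p)) ^ (2*p^2/3) / 2) ^ (3/(2*p^2 - 3*p)) < c) :
    ¬ BddBelow (Ifun a b p q '' Sset p c) := by
  intro hbdd
  obtain ⟨M, hM⟩ := hbdd
  have hp : 0 < p := by linarith
  set L : ℝ := lpPow p Q with hL_def
  set m : ℝ := L ^ (1/p) with hm_def
  have hm : 0 < m := Real.rpow_pos_of_pos hQpos _
  have hmp : m ^ p = L := by
    rw [hm_def, ← Real.rpow_mul hQpos.le, one_div_mul_cancel hp.ne', Real.rpow_one]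
  set k : ℝ := c / m with hk_def
  have hD : 0 < b * m ^ (2*p^2/3) / 2 := by positivity
  have hcpos : 0 < c := lt_trans (Real.rpow_pos_of_pos hD _) hc
  have hk : 0 < k := div_pos hcpos hm
  have hsq : 0 < p^2 := by positivity
  have hprod : 0 < p * (2*p - 3) := mul_pos hp (by linarith)
  have hprod' : p * (2*p - 3) = 2*p^2 - 3*p := by ring
  have hq0 : 0 < q := by rw [hq]; linarith
  have hqp2 : 0 < q - 2*p := by rw [hq]; linarith
  have hden : (2*p^2 - 3*p) ≠ 0 := by linarith
  have hkpL : k ^ p * L = c ^ p := by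
    rw [hk_def, Real.div_rpow hcpos.le hm.le, hmp]
    field_simp
  -- the key inequality from hc
  have hkqL : k ^ q * L = c ^ q * m ^ (p - q) := by
    rw [hk_def, Real.div_rpow hcpos.le hm.le, ← hmp, Real.rpow_sub hm]
    field_simp
  have h1 : b * m ^ (2*p^2/3) / 2 < c ^ (q - 2*p) := by
    have h0 := Real.rpow_lt_rpow (Real.rpow_nonneg hD.le _) hc hqp2
    rwa [← Real.rpow_mul hD.le, show 3/(2*p^2 - 3*p) * (q - 2*p) = 1 by
      rw [hq, div_mul_eq_mul_div, div_eq_one_iff_eq hden]; ring, Real.rpow_one] at h0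
  have hc2 : c ^ (2*p) = (c ^ p) ^ 2 := by
    rw [two_mul, Real.rpow_add hcpos, sq]
  have hmm : m ^ (q - p) * m ^ (p - q) = 1 := by
    rw [← Real.rpow_add hm, show q - p + (p - q) = (0:ℝ) by ring, Real.rpow_zero]
  have hqp : q - p = 2*p^2/3 := by rw [hq]; ring
  have pos2 : 0 < c ^ (2*p) * m ^ (p - q) := by positivity
  have key : b/2 * (c ^ p) ^ 2 < k ^ q * L := by
    have hckey := mul_lt_mul_of_pos_right h1 pos2
    have eq1 : b * m ^ (2*p^2/3) / 2 * (c ^ (2*p) * m ^ (p - q)) = b/2 * (c ^ p) ^ 2 := by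
      rw [← hqp, hc2]
      calc b * m ^ (q - p) / 2 * ((c ^ p) ^ 2 * m ^ (p - q))
          = b/2 * (c ^ p) ^ 2 * (m ^ (q - p) * m ^ (p - q)) := by ring
        _ = b/2 * (c ^ p) ^ 2 := by rw [hmm, mul_one]
    have eq2 : c ^ (q - 2*p) * (c ^ (2*p) * m ^ (p - q)) = k ^ q * L := by
      rw [hkqL, ← mul_assoc, ← Real.rpow_add hcpos, show q - 2*p + 2*p = q by ring]
    rw [eq1, eq2] at hckey
    exact hckey
  set A : ℝ := a/p * c ^ p with hA_def
  set B : ℝ := b/(2*p) * (c ^ p) ^ 2 - 1/p * (k ^ q * L) with hB_def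
  have hA : 0 < A := by
    have := Real.rpow_pos_of_pos hcpos p
    positivity
  have hB : B < 0 := by
    have h := mul_lt_mul_of_pos_left key (by positivity : (0:ℝ) < 1/p)
    have e : 1/p * (b/2 * (c ^ p) ^ 2) = b/(2*p) * (c ^ p) ^ 2 := by
      ring
    rw [e] at h
    rw [hB_def]; linarith
  -- choose s large
  set s : ℝ := max 1 ((A + |M| + 1)/(-B)) with hs_def
  have hs1 : (1:ℝ) ≤ s := le_max_left _ _
  have hs0 : 0 < s := lt_of_lt_of_le one_pos hs1
  have hs2 : (A + |M| + 1)/(-B) ≤ s := le_max_right _ _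
  set t : ℝ := s ^ (1/p) with ht_def
  have ht : 0 < t := Real.rpow_pos_of_pos hs0 _
  have htp : t ^ p = s := by
    rw [ht_def, ← Real.rpow_mul hs0.le, one_div_mul_cancel hp.ne', Real.rpow_one]
  set K : ℝ := k * t ^ (3/p) with hK_def
  have hKpos : 0 < K := by
    have := Real.rpow_pos_of_pos ht (3/p); positivity
  have habsK : |K| = K := abs_of_pos hKpos
  have ht3 : (t:ℝ) ^ (3:ℕ) ≠ 0 := by positivity
  have hnat3 : t ^ ((3:ℝ)) = t ^ (3:ℕ) := by
    rw [show (3:ℝ) = ((3:ℕ):ℝ) by norm_num, Real.rpow_natCast]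
  have hKp : K ^ p = k ^ p * t ^ (3:ℕ) := by
    rw [hK_def, Real.mul_rpow hk.le (Real.rpow_nonneg ht.le _), ← Real.rpow_mul ht.le,
      div_mul_cancel₀ _ hp.ne', hnat3]
  have h2ps : t ^ (2*p) = s ^ (2:ℕ) := by
    rw [mul_comm, Real.rpow_mul ht.le, htp, show (2:ℝ) = ((2:ℕ):ℝ) by norm_num,
      Real.rpow_natCast]
  have hKq : K ^ q = k ^ q * t ^ (3:ℕ) * s ^ (2:ℕ) := by
    rw [hK_def, Real.mul_rpow hk.le (Real.rpow_nonneg ht.le _), ← Real.rpow_mul ht.le,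
      show 3/p * q = 3 + 2*p by rw [hq]; field_simp, Real.rpow_add ht, hnat3, h2ps]
    ring
  -- the test function
  set u : E3 → ℝ := fun x => K * Q (t • x) with hu_def
  have hcan : (t ^ (3:ℕ)) * (t ^ (3:ℕ))⁻¹ = 1 := mul_inv_cancel₀ ht3
  have h_lp : lpPow p u = c ^ p := by
    rw [hu_def, lpPow_scale p t K ht Q, habsK, hKp, ← hL_def]
    calc k ^ p * t ^ (3:ℕ) * (t ^ (3:ℕ))⁻¹ * L
        = k ^ p * L * (t ^ (3:ℕ) * (t ^ (3:ℕ))⁻¹) := by ring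
      _ = k ^ p * L := by rw [hcan, mul_one]
      _ = c ^ p := hkpL
  have h_grad : gradPow p u = c ^ p * s := by
    rw [hu_def, gradPow_scale p t K ht Q hQ.1, abs_of_pos (by positivity : 0 < K * t),
      Real.mul_rpow hKpos.le ht.le, hKp, htp, hQgrad]
    calc k ^ p * t ^ (3:ℕ) * s * (t ^ (3:ℕ))⁻¹ * L
        = k ^ p * L * s * (t ^ (3:ℕ) * (t ^ (3:ℕ))⁻¹) := by ring
      _ = k ^ p * L * s := by rw [hcan, mul_one]
      _ = c ^ p * s := by rw [hkpL]
  have h_q : lpPow q u = k ^ q * (q/p) * L * s ^ (2:ℕ) := by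
    rw [hu_def, lpPow_scale q t K ht Q, habsK, hKq, hQq]
    calc k ^ q * t ^ (3:ℕ) * s ^ (2:ℕ) * (t ^ (3:ℕ))⁻¹ * (q/p * L)
        = k ^ q * (q/p) * L * s ^ (2:ℕ) * (t ^ (3:ℕ) * (t ^ (3:ℕ))⁻¹) := by ring
      _ = k ^ q * (q/p) * L * s ^ (2:ℕ) := by rw [hcan, mul_one]
  -- membership in Sset
  have hdiff : Differentiable ℝ u := by
    have h0 : Differentiable ℝ (fun x : E3 => t • x) := differentiable_id.const_smul t
    exact (hQ.1.comp h0).const_mul K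
  have hint1 : Integrable (fun x : E3 => |u x| ^ p) := by
    have he : (fun x : E3 => |u x| ^ p) = fun x => |K| ^ p * |Q (t • x)| ^ p :=
      funext fun x => by
        rw [hu_def, abs_mul, Real.mul_rpow (abs_nonneg _) (abs_nonneg _)]
    rw [he]
    exact ((hQ.2.1).comp_smul ht.ne').const_mul _
  have hint2 : Integrable (fun x : E3 => ‖fderiv ℝ u x‖ ^ p) := by
    have he : (fun x : E3 => ‖fderiv ℝ u x‖ ^ p)
        = fun x => |K * t| ^ p * ‖fderiv ℝ Q (t • x)‖ ^ p :=
      funext fun x => by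
        rw [hu_def, fderiv_scale t K Q hQ.1, norm_smul, Real.norm_eq_abs,
          Real.mul_rpow (abs_nonneg _) (norm_nonneg _)]
    rw [he]
    exact ((hQ.2.2).comp_smul ht.ne').const_mul _
  have hmem : u ∈ Sset p c := ⟨⟨hdiff, hint1, hint2⟩, h_lp⟩
  have hval : Ifun a b p q u = A * s + B * s ^ 2 := by
    unfold Ifun
    rw [h_grad, h_q, hA_def, hB_def]
    field_simp
    ring
  have hMle := hM (mem_image_of_mem _ hmem)
  rw [hval] at hMle
  -- contradiction: A*s + B*s^2 < M
  have h2' : A + |M| + 1 ≤ s * -B := by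
    rwa [div_le_iff₀ (by linarith : 0 < -B)] at hs2
  have f1 : (A + |M| + 1) * s ≤ (s * -B) * s := mul_le_mul_of_nonneg_right h2' hs0.le
  have f3 : (|M| + 1) * 1 ≤ (|M| + 1) * s :=
    mul_le_mul_of_nonneg_left hs1 (by positivity)
  have f4 : -|M| ≤ M := neg_abs_le M
  linarith [f1, f3, f4]
end
end

section
/- Let 3/2<p<3, a,b>0, q = p+2p^2/3, and 0 < c ≤ (b|Q|_p^{2p^2/3}/2)^{3/(2p^2-3p)}. Then I(u) ≥ 0 for all u ∈ S(c), hence i(c) = 0, and i(c) has no minimizer: there is no u ∈ S(c) with I(u) = 0. -/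
open MeasureTheory Real Set Filter

noncomputable section

lemma gradPow_nonneg (p : ℝ) (u : E3 → ℝ) : 0 ≤ gradPow p u :=
  integral_nonneg fun x => Real.rpow_nonneg (norm_nonneg _) _

lemma lpPow_nonneg (s : ℝ) (u : E3 → ℝ) : 0 ≤ lpPow s u :=
  integral_nonneg fun x => Real.rpow_nonneg (abs_nonneg _) _

section KeyEst


variable {a b p q c : ℝ} {Q : E3 → ℝ}

lemma key_est (hb : 0 < b) (hp1 : 3/2 < p) (hp2 : p < 3) (hq : q = p + 2*p^2/3)
    (hQpos : 0 < lpPow p Q)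
    (hGN : ∀ u : E3 → ℝ, Wmem p u →
      lpPow q u ≤ q / (p * ((lpPow p Q) ^ (1/p)) ^ (q-p)) *
        (gradPow p u) ^ (3*(q-p)/p^2) * (lpPow p u) ^ ((q - 3*(q-p)/p)/p))
    (hc0 : 0 < c)
    (hc : c ≤ (b * ((lpPow p Q) ^ (1/p)) ^ (2*p^2/3) / 2) ^ (3/(2*p^2 - 3*p)))
    {u : E3 → ℝ} (hu : u ∈ Sset p c) :
    1 / q * lpPow q u ≤ b / (2*p) * (gradPow p u) ^ 2 := by
  have hp0 : 0 < p := by linarith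
  have hq0 : 0 < q := by rw [hq]; nlinarith
  set M : ℝ := (lpPow p Q) ^ (1/p) with hM
  have hM0 : 0 < M := Real.rpow_pos_of_pos hQpos _
  set E : ℝ := 2*p^2/3 with hE
  have hqp : q - p = E := by rw [hq, hE]; ring
  have hexp1 : 3*(q-p)/p^2 = 2 := by rw [hqp, hE]; field_simp
  have hexp2 : (q - 3*(q-p)/p)/p = E/p - 1 := by
    rw [hqp, hq, hE]; field_simp; ring
  have hG := hGN u hu.1
  rw [hexp1, hexp2, hqp, hu.2] at hG
  have hg0 : 0 ≤ gradPow p u := gradPow_nonneg p u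
  have hcE : (c ^ p : ℝ) ^ (E/p - 1) = c ^ (E - p) := by
    rw [← Real.rpow_mul hc0.le]
    congr 1
    field_simp
  rw [hcE] at hG
  -- from hc : c ≤ (b*M^E/2) ^ (3/(2p^2-3p)), deduce c ^ (E - p) ≤ b * M ^ E / 2
  have hEp : 0 < E - p := by rw [hE]; nlinarith
  have hX0 : 0 < b * M ^ E / 2 := by positivity
  have h2 : 2*p^2 - 3*p = 3 * (E - p) := by rw [hE]; ring
  have hcc : c ^ (E - p) ≤ b * M ^ E / 2 := by
    have h3 : (0:ℝ) < 2*p^2 - 3*p := by rw [h2]; linarith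
    have := Real.rpow_le_rpow hc0.le hc hEp.le
    rw [← Real.rpow_mul hX0.le] at this
    rw [show 3 / (2*p^2 - 3*p) * (E - p) = 1 by rw [h2]; field_simp] at this
    rwa [Real.rpow_one] at this
  rw [show (2:ℝ) = ((2:ℕ):ℝ) by norm_num, Real.rpow_natCast] at hG
  have hME : 0 < M ^ E := Real.rpow_pos_of_pos hM0 _
  have hcE0 : 0 ≤ c ^ (E - p) := Real.rpow_nonneg hc0.le _
  calc 1 / q * lpPow q u ≤ 1 / q * (q / (p * M ^ E) * gradPow p u ^ 2 * c ^ (E - p)) :=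
        mul_le_mul_of_nonneg_left hG (by positivity)
    _ = (1 / (p * M ^ E) * gradPow p u ^ 2) * c ^ (E - p) := by field_simp
    _ ≤ (1 / (p * M ^ E) * gradPow p u ^ 2) * (b * M ^ E / 2) :=
        mul_le_mul_of_nonneg_left hcc (by positivity)
    _ = b / (2*p) * gradPow p u ^ 2 := by field_simp

end KeyEst


lemma line_const (u : E3 → ℝ) (hd : Differentiable ℝ u)
    (h0 : ∀ᵐ x : E3, fderiv ℝ u x = 0) :
    ∀ (x : E3) (t : ℝ), u (x + t • (EuclideanSpace.single (0:Fin 3) (1:ℝ))) = u x := by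
  classical
  set e := (MeasurableEquiv.toLp 2 (Fin 3 → ℝ)).symm with he
  set Lc := (PiLp.continuousLinearEquiv 2 ℝ (fun _ : Fin 3 => ℝ)).symm with hLc
  have hLce : ∀ y : Fin 3 → ℝ, Lc y = e.symm y := fun _ => rfl
  set v : (Fin 3 → ℝ) → ℝ := fun y => u (Lc y) with hv
  have hvd : Differentiable ℝ v := hd.comp Lc.differentiable
  have hvc : Continuous v := hvd.continuous
  -- directional derivative function
  set D : (Fin 3 → ℝ) → ℝ := fun y => fderiv ℝ v y (Pi.single 0 1) with hD
  have hDmeas : Measurable D := measurable_fderiv_apply_const (𝕜 := ℝ) (f := v) (Pi.single 0 1)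
  -- a.e. zero on pi space
  have hmp : MeasurePreserving (⇑e.symm) volume volume :=
    (EuclideanSpace.volume_preserving_symm_measurableEquiv_toLp (Fin 3)).symm
  have h1 : ∀ᵐ y : Fin 3 → ℝ, D y = 0 := by
    have h1' : ∀ᵐ y : Fin 3 → ℝ, fderiv ℝ u (e.symm y) = 0 :=
      hmp.quasiMeasurePreserving.tendsto_ae.eventually h0
    filter_upwards [h1'] with y hy
    have : fderiv ℝ (u ∘ Lc) y = (fderiv ℝ u (Lc y)).comp (Lc : (Fin 3 → ℝ) →L[ℝ] E3) :=
      Lc.comp_right_fderiv (f := u)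
    simp only [hD]
    show fderiv ℝ (fun z => u (Lc z)) y (Pi.single 0 1) = 0
    rw [show (fun z => u (Lc z)) = u ∘ Lc from rfl, this, hLce, hy]
    simp
  -- to product space
  have hmp2 : MeasurePreserving
      (⇑(MeasurableEquiv.piFinSuccAbove (fun _ : Fin 3 => ℝ) 0).symm) volume volume :=
    (volume_preserving_piFinSuccAbove (fun _ : Fin 3 => ℝ) 0).symm
  have h2 : ∀ᵐ z : ℝ × (Fin 2 → ℝ), D (Fin.cons z.1 z.2) = 0 := by
    have := hmp2.quasiMeasurePreserving.tendsto_ae.eventually h1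
    filter_upwards [this] with z hz
    simpa [Fin.insertNthEquiv, Fin.insertNth_zero'] using hz
  have h3 : ∀ᵐ y : Fin 2 → ℝ, ∀ᵐ t : ℝ, D (Fin.cons t y) = 0 := by
    rw [Measure.volume_eq_prod] at h2
    have hsw := (Measure.measurePreserving_swap
      (μ := (volume : Measure (Fin 2 → ℝ))) (ν := (volume : Measure ℝ)))
    have h2' := hsw.quasiMeasurePreserving.tendsto_ae.eventually h2
    exact Measure.ae_ae_of_ae_prod h2'
  -- for good y, the line is constant
  set sngl : Fin 3 → ℝ := Pi.single 0 1 with hsngl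
  have hcons : ∀ (t : ℝ) (y : Fin 2 → ℝ),
      Fin.cons t y = Fin.cons (0:ℝ) y + t • sngl := by
    intro t y
    funext i
    refine Fin.cases ?_ (fun j => ?_) i <;>
      simp [hsngl, Pi.single_eq_same, Fin.cons_zero, Fin.cons_succ,
        Pi.single_eq_of_ne (Fin.succ_ne_zero _)]
  have hgood : ∀ y : Fin 2 → ℝ, (∀ᵐ t : ℝ, D (Fin.cons t y) = 0) →
      ∀ t : ℝ, v (Fin.cons t y) = v (Fin.cons 0 y) := by
    intro y hy t
    have hderiv : ∀ s : ℝ, HasDerivAt (fun s => v (Fin.cons s y)) (D (Fin.cons s y)) s := by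
      intro s
      have hline : HasDerivAt (fun s : ℝ => Fin.cons (0:ℝ) y + s • sngl) sngl s := by
        simpa using ((hasDerivAt_id s).smul_const sngl).const_add (Fin.cons (0:ℝ) y)
      have hline' : HasDerivAt (fun s : ℝ => (Fin.cons s y : Fin 3 → ℝ)) sngl s := by
        simp_rw [← hcons] at hline; exact hline
      have := (hvd.differentiableAt.hasFDerivAt
        (x := Fin.cons s y)).comp_hasDerivAt s hline'
      exact this
    have hint : IntervalIntegrable (fun s => D (Fin.cons s y)) volume 0 t := by
      refine (MeasureTheory.Integrable.intervalIntegrable ?_)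
      exact (integrable_zero _ _ _).congr (hy.mono fun s hs => hs.symm)
    have hftc := intervalIntegral.integral_eq_sub_of_hasDerivAt
      (f := fun s => v (Fin.cons s y)) (a := 0) (b := t) (fun s _ => hderiv s) hint
    have hzero : (∫ s in (0:ℝ)..t, D (Fin.cons s y)) = 0 := by
      rw [intervalIntegral.integral_congr_ae (g := fun _ => (0:ℝ))
        (hy.mono fun s hs _ => hs)]
      simp
    rw [hzero] at hftc
    linarith [hftc]
  -- density
  have hdense : ∀ (y : Fin 2 → ℝ) (s : ℝ), v (Fin.cons s y) = v (Fin.cons 0 y) := by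
    intro y s
    have hcl : y ∈ closure {y : Fin 2 → ℝ | ∀ᵐ t : ℝ, D (Fin.cons t y) = 0} := by
      by_contra hy
      rw [← mem_compl_iff] at hy
      have hop : IsOpen (closure {y : Fin 2 → ℝ | ∀ᵐ t : ℝ, D (Fin.cons t y) = 0})ᶜ :=
        isClosed_closure.isOpen_compl
      obtain ⟨r, hr, hball⟩ := Metric.isOpen_iff.1 hop y hy
      have hsub : Metric.ball y r ⊆ {y : Fin 2 → ℝ | ∀ᵐ t : ℝ, D (Fin.cons t y) = 0}ᶜ :=
        hball.trans (compl_subset_compl.2 subset_closure)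
      have hnull : volume (Metric.ball y r) = 0 :=
        measure_mono_null hsub h3
      exact absurd hnull (Metric.measure_ball_pos volume y hr).ne'
    obtain ⟨seq, hseq, hlim⟩ := mem_closure_iff_seq_limit.1 hcl
    have hconsCont : ∀ s : ℝ, Continuous (fun y : Fin 2 → ℝ => Fin.cons s y : (Fin 2 → ℝ) → (Fin 3 → ℝ)) := by
      intro s
      refine continuous_pi fun i => ?_
      refine Fin.cases ?_ (fun j => ?_) i
      · simpa using continuous_const
      · simpa using continuous_apply j
    have hl1 : Tendsto (fun n => v (Fin.cons s (seq n))) atTop (nhds (v (Fin.cons s y))) :=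
      (hvc.comp (hconsCont s)).continuousAt.tendsto.comp hlim
    have hl2 : Tendsto (fun n => v (Fin.cons 0 (seq n))) atTop (nhds (v (Fin.cons 0 y))) :=
      (hvc.comp (hconsCont 0)).continuousAt.tendsto.comp hlim
    have heq : (fun n => v (Fin.cons s (seq n))) = fun n => v (Fin.cons 0 (seq n)) :=
      funext fun n => hgood (seq n) (hseq n) s
    rw [heq] at hl1
    exact tendsto_nhds_unique hl1 hl2
  -- assembly
  intro x t
  have huv : ∀ z : E3, v (e z) = u z := fun z => by
    show u (Lc (e z)) = u z
    rw [hLce, e.symm_apply_apply]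
  have hkey : e (x + t • (EuclideanSpace.single (0:Fin 3) (1:ℝ)))
      = Fin.cons (e x 0 + t) (Fin.tail (e x)) := by
    funext i
    have hadd : e (x + t • (EuclideanSpace.single (0:Fin 3) (1:ℝ)))
        = e x + t • sngl := by
      show WithLp.ofLp (x + t • (EuclideanSpace.single (0:Fin 3) (1:ℝ)))
        = WithLp.ofLp x + t • sngl
      rw [WithLp.ofLp_add, WithLp.ofLp_smul, PiLp.ofLp_single]
    rw [hadd]
    refine Fin.cases ?_ (fun j => ?_) i <;>
      simp [hsngl, Fin.tail, Pi.single_eq_of_ne (Fin.succ_ne_zero _)]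
  calc u (x + t • (EuclideanSpace.single (0:Fin 3) (1:ℝ)))
      = v (e (x + t • (EuclideanSpace.single (0:Fin 3) (1:ℝ)))) := (huv _).symm
    _ = v (Fin.cons (e x 0 + t) (Fin.tail (e x))) := by rw [hkey]
    _ = v (Fin.cons 0 (Fin.tail (e x))) := hdense _ _
    _ = v (Fin.cons (e x 0) (Fin.tail (e x))) := (hdense _ _).symm
    _ = v (e x) := by rw [Fin.cons_self_tail]
    _ = u x := huv x

lemma vanish_of_trans (u : E3 → ℝ) {p : ℝ} (hp0 : 0 < p) (hcont : Continuous u)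
    (hint : MeasureTheory.Integrable (fun x : E3 => |u x| ^ p))
    (htrans : ∀ (x : E3) (t : ℝ),
      u (x + t • (EuclideanSpace.single (0:Fin 3) (1:ℝ))) = u x) :
    ∀ x, u x = 0 := by
  set B : E3 := EuclideanSpace.single (0:Fin 3) (1:ℝ) with hB
  have hBnorm : ‖B‖ = 1 := by rw [hB, EuclideanSpace.norm_single]; norm_num
  by_contra hne
  push_neg at hne
  obtain ⟨x₀, hx₀⟩ := hne
  set ε : ℝ := |u x₀| / 2 with hε
  have hε0 : 0 < ε := by
    rw [hε]; positivity
  have hopen : IsOpen {x : E3 | ε < |u x|} :=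
    isOpen_lt continuous_const (hcont.abs)
  obtain ⟨r, hr0, hball⟩ := Metric.isOpen_iff.1 hopen x₀ (by
    simp only [mem_setOf_eq, hε]
    have : 0 < |u x₀| := abs_pos.2 hx₀
    linarith)
  set S : Set E3 := {x | ε ^ p ≤ |u x| ^ p} with hS
  have hSfin : volume S < ⊤ := by
    have := hint.measure_ge_lt_top (Real.rpow_pos_of_pos hε0 p)
    exact this
  set cn : ℕ → E3 := fun n => x₀ + (3 * r * n) • B with hcn
  have hsub : ∀ n : ℕ, Metric.ball (cn n) r ⊆ S := by
    intro n z hz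
    have hz' : z - (3 * r * n) • B ∈ Metric.ball x₀ r := by
      rw [Metric.mem_ball] at hz ⊢
      have : dist (z - (3 * r * n) • B) x₀ = dist z (cn n) := by
        rw [hcn]
        rw [show x₀ = (x₀ + (3 * r * ↑n) • B) - (3 * r * ↑n) • B by abel]
        rw [dist_sub_right]
        congr 1
        abel
      rwa [this]
    have hlt : ε < |u z| := by
      have := hball hz'
      simp only [mem_setOf_eq] at this
      have h2 : u z = u (z - (3 * r * ↑n) • B) := by
        conv_lhs => rw [show z = z - (3 * r * (n:ℝ)) • B + (3 * r * (n:ℝ)) • B by abel]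
        rw [htrans]
      rw [h2]
      exact this
    exact Real.rpow_le_rpow hε0.le hlt.le (le_of_lt hp0)
  have hdisj : Pairwise (Function.onFun Disjoint (fun n => Metric.ball (cn n) r)) := by
    intro n m hnm
    apply Metric.ball_disjoint_ball
    have hd : dist (cn n) (cn m) = 3 * r * |(n:ℝ) - m| := by
      rw [hcn, dist_eq_norm]
      rw [show (x₀ + (3 * r * (n:ℝ)) • B) - (x₀ + (3 * r * (m:ℝ)) • B)
          = ((3 * r * (n:ℝ)) - (3 * r * (m:ℝ))) • B by rw [sub_smul]; abel]
      rw [norm_smul, hBnorm, mul_one, Real.norm_eq_abs]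
      rw [show 3 * r * (n:ℝ) - 3 * r * m = 3 * r * ((n:ℝ) - m) by ring,
        abs_mul, abs_of_nonneg (by linarith)]
    have h1 : (1:ℝ) ≤ |(n:ℝ) - m| := by
      have : ((n:ℤ) - m) ≠ 0 := sub_ne_zero.2 (by exact_mod_cast hnm)
      have := Int.one_le_abs this
      calc (1:ℝ) ≤ |((n:ℤ) - m : ℤ)| := by exact_mod_cast this
        _ = |(n:ℝ) - m| := by push_cast; ring_nf
    rw [hd]
    nlinarith
  have htop : volume S = ⊤ := by
    have h1 : volume (⋃ n : ℕ, Metric.ball (cn n) r) = ∑' n : ℕ, volume (Metric.ball (cn n) r) :=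
      measure_iUnion hdisj fun n => measurableSet_ball
    have h2 : ∀ n : ℕ, volume (Metric.ball (cn n) r) = volume (Metric.ball (0:E3) r) := fun n =>
      Measure.addHaar_ball_center volume (cn n) r
    have h3 : (∑' _ : ℕ, volume (Metric.ball (0:E3) r)) = ⊤ :=
      ENNReal.tsum_const_eq_top_of_ne_zero (Metric.measure_ball_pos volume 0 hr0).ne'
    have h4 : volume (⋃ n : ℕ, Metric.ball (cn n) r) = ⊤ := by
      rw [h1]; simp_rw [h2]; exact h3
    have h5 := measure_mono (μ := (volume : Measure E3)) (iUnion_subset hsub)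
    rw [h4] at h5
    exact top_le_iff.1 h5
  rw [htop] at hSfin
  exact absurd hSfin (lt_irrefl _)


lemma exists_base (p : ℝ) (hp0 : 0 < p) (c : ℝ) (hc0 : 0 < c) :
    ∃ u : E3 → ℝ, Differentiable ℝ u ∧
      (∀ s : ℝ, 0 < s → MeasureTheory.Integrable (fun x : E3 => |u x| ^ s)) ∧
      MeasureTheory.Integrable (fun x : E3 => ‖fderiv ℝ u x‖ ^ p) ∧
      lpPow p u = c ^ p := by
  classical
  set f : ContDiffBump (0:E3) :=
    { rIn := 1, rOut := 2, rIn_pos := one_pos, rIn_lt_rOut := one_lt_two } with hf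
  set u₀ : E3 → ℝ := ⇑f with hu₀
  have hd0 : Differentiable ℝ u₀ := (f.contDiff (n := ⊤)).differentiable (by simp)
  have hcs : HasCompactSupport u₀ := f.hasCompactSupport
  have hIs : ∀ s : ℝ, 0 < s → MeasureTheory.Integrable (fun x : E3 => |u₀ x| ^ s) := by
    intro s hs
    have hcont : Continuous fun x : E3 => |u₀ x| ^ s :=
      (f.continuous.abs).rpow_const fun x => Or.inr hs.le
    have hsupp : HasCompactSupport fun x : E3 => |u₀ x| ^ s := by
      have : (fun x : E3 => |u₀ x| ^ s) = (fun y : ℝ => |y| ^ s) ∘ u₀ := rfl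
      rw [this]
      exact hcs.comp_left (by simp [Real.zero_rpow hs.ne'])
    exact hcont.integrable_of_hasCompactSupport hsupp
  have hIg : MeasureTheory.Integrable (fun x : E3 => ‖fderiv ℝ u₀ x‖ ^ p) := by
    have hcont : Continuous fun x : E3 => ‖fderiv ℝ u₀ x‖ ^ p :=
      ((f.contDiff (n := ⊤)).continuous_fderiv (by simp)).norm.rpow_const fun x => Or.inr hp0.le
    have hsupp : HasCompactSupport fun x : E3 => ‖fderiv ℝ u₀ x‖ ^ p := by
      have : (fun x : E3 => ‖fderiv ℝ u₀ x‖ ^ p)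
          = (fun L : E3 →L[ℝ] ℝ => ‖L‖ ^ p) ∘ (fderiv ℝ u₀) := rfl
      rw [this]
      exact (HasCompactSupport.fderiv (𝕜 := ℝ) hcs).comp_left (by simp [Real.zero_rpow hp0.ne'])
    exact hcont.integrable_of_hasCompactSupport hsupp
  set L : ℝ := lpPow p u₀ with hL
  have hL0 : 0 < L := by
    have hnn : 0 ≤ᵐ[volume] fun x : E3 => |u₀ x| ^ p :=
      Filter.Eventually.of_forall fun x => Real.rpow_nonneg (abs_nonneg _) _
    have h1 : ∫ x in Metric.ball (0:E3) 1, |u₀ x| ^ p ≤ L :=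
      setIntegral_le_integral (hIs p hp0) hnn
    have h2 : ∫ x in Metric.ball (0:E3) 1, |u₀ x| ^ p
        = ∫ _x in Metric.ball (0:E3) 1, (1:ℝ) := by
      refine setIntegral_congr_fun measurableSet_ball fun x hx => ?_
      have : u₀ x = 1 := f.one_of_mem_closedBall (Metric.ball_subset_closedBall hx)
      rw [this]
      simp [Real.one_rpow]
    have h3 : ∫ _x in Metric.ball (0:E3) 1, (1:ℝ)
        = (volume (Metric.ball (0:E3) 1)).toReal := by simp [Measure.real]
    have h4 : 0 < (volume (Metric.ball (0:E3) 1)).toReal :=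
      ENNReal.toReal_pos (Metric.measure_ball_pos volume 0 one_pos).ne'
        (measure_ball_lt_top).ne
    rw [h2, h3] at h1
    linarith
  set lam : ℝ := c * L ^ (-(1/p)) with hlam
  have hlam0 : 0 < lam := mul_pos hc0 (Real.rpow_pos_of_pos hL0 _)
  refine ⟨fun x => lam * u₀ x, hd0.const_mul lam, ?_, ?_, ?_⟩
  · intro s hs
    have heq : (fun x : E3 => |lam * u₀ x| ^ s)
        = fun x : E3 => lam ^ s * |u₀ x| ^ s := by
      funext x
      rw [abs_mul, Real.mul_rpow (abs_nonneg _) (abs_nonneg _), abs_of_pos hlam0]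
    rw [heq]
    exact (hIs s hs).const_mul _
  · have heq : (fun x : E3 => ‖fderiv ℝ (fun y => lam * u₀ y) x‖ ^ p)
        = fun x : E3 => lam ^ p * ‖fderiv ℝ u₀ x‖ ^ p := by
      funext x
      rw [fderiv_const_mul (hd0.differentiableAt) lam, norm_smul,
        Real.mul_rpow (norm_nonneg _) (norm_nonneg _), Real.norm_eq_abs, abs_of_pos hlam0]
    rw [heq]
    exact hIg.const_mul _
  · have heq : (fun x : E3 => |lam * u₀ x| ^ p)
        = fun x : E3 => lam ^ p * |u₀ x| ^ p := by
      funext x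
      rw [abs_mul, Real.mul_rpow (abs_nonneg _) (abs_nonneg _), abs_of_pos hlam0]
    have h1 : lpPow p (fun x => lam * u₀ x) = lam ^ p * L := by
      rw [lpPow, heq, MeasureTheory.integral_const_mul]
      rfl
    rw [h1, hlam, Real.mul_rpow hc0.le (Real.rpow_nonneg hL0.le _),
      ← Real.rpow_mul hL0.le]
    rw [show -(1/p) * p = -1 by field_simp]
    rw [Real.rpow_neg_one]
    field_simp

lemma scaled_props (p : ℝ) (hp0 : 0 < p) (u : E3 → ℝ) (hd : Differentiable ℝ u)
    (hIs : ∀ s : ℝ, 0 < s → MeasureTheory.Integrable (fun x : E3 => |u x| ^ s))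
    (hIg : MeasureTheory.Integrable (fun x : E3 => ‖fderiv ℝ u x‖ ^ p))
    (t : ℝ) (ht : 0 < t) :
    Differentiable ℝ (fun x : E3 => t ^ (3/p) * u (t • x)) ∧
    (∀ s : ℝ, 0 < s →
      MeasureTheory.Integrable (fun x : E3 => |t ^ (3/p) * u (t • x)| ^ s)) ∧
    MeasureTheory.Integrable (fun x : E3 => ‖fderiv ℝ (fun y : E3 => t ^ (3/p) * u (t • y)) x‖ ^ p) ∧
    (∀ s : ℝ, 0 < s → lpPow s (fun x : E3 => t ^ (3/p) * u (t • x))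
      = t ^ (3*s/p - 3) * lpPow s u) ∧
    gradPow p (fun x : E3 => t ^ (3/p) * u (t • x)) = t ^ p * gradPow p u := by
  have htp : 0 < t ^ (3/p) := Real.rpow_pos_of_pos ht _
  have hsm : Differentiable ℝ (fun x : E3 => t • x) := fun x =>
    (differentiable_id.const_smul t).differentiableAt
  have hcomp : Differentiable ℝ (fun x : E3 => u (t • x)) := hd.comp hsm
  have hdut : Differentiable ℝ (fun x : E3 => t ^ (3/p) * u (t • x)) :=
    hcomp.const_mul _
  -- pointwise fderiv formula
  have hfd : ∀ x : E3, fderiv ℝ (fun y : E3 => t ^ (3/p) * u (t • y)) x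
      = (t ^ (3/p) * t) • fderiv ℝ u (t • x) := by
    intro x
    have h1 : HasFDerivAt (fun y : E3 => t • y)
        (t • (ContinuousLinearMap.id ℝ E3)) x := (hasFDerivAt_id x).const_smul t
    have h2 : HasFDerivAt u (fderiv ℝ u (t • x)) (t • x) :=
      (hd (t • x)).hasFDerivAt
    have h3 : HasFDerivAt (fun y : E3 => u (t • y))
        ((fderiv ℝ u (t • x)).comp (t • (ContinuousLinearMap.id ℝ E3))) x :=
      h2.comp x h1
    have h4 : (fderiv ℝ u (t • x)).comp (t • (ContinuousLinearMap.id ℝ E3))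
        = t • fderiv ℝ u (t • x) := by
      ext v
      simp [ContinuousLinearMap.comp_apply, _root_.map_smul]
    rw [h4] at h3
    have h5 := h3.const_mul (t ^ (3/p))
    rw [h5.fderiv]
    rw [smul_smul]
  -- norm formula
  have hnorm : ∀ x : E3, ‖fderiv ℝ (fun y : E3 => t ^ (3/p) * u (t • y)) x‖ ^ p
      = (t ^ (3/p) * t) ^ p * ‖fderiv ℝ u (t • x)‖ ^ p := by
    intro x
    rw [hfd x, norm_smul, Real.norm_eq_abs,
      abs_of_pos (by positivity : (0:ℝ) < t ^ (3/p) * t),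
      Real.mul_rpow (by positivity) (norm_nonneg _)]
  have habs : ∀ (s : ℝ) (x : E3), |t ^ (3/p) * u (t • x)| ^ s
      = (t ^ (3/p)) ^ s * |u (t • x)| ^ s := by
    intro s x
    rw [abs_mul, Real.mul_rpow (abs_nonneg _) (abs_nonneg _), abs_of_pos htp]
  have hfin3 : Module.finrank ℝ E3 = 3 := finrank_euclideanSpace_fin
  refine ⟨hdut, ?_, ?_, ?_, ?_⟩
  · intro s hs
    have : (fun x : E3 => |t ^ (3/p) * u (t • x)| ^ s)
        = fun x : E3 => (t ^ (3/p)) ^ s * |u (t • x)| ^ s := funext (habs s)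
    rw [this]
    exact (((integrable_comp_smul_iff volume
      (fun y : E3 => |u y| ^ s) ht.ne').2 (hIs s hs)).const_mul _)
  · have : (fun x : E3 => ‖fderiv ℝ (fun y : E3 => t ^ (3/p) * u (t • y)) x‖ ^ p)
        = fun x : E3 => (t ^ (3/p) * t) ^ p * ‖fderiv ℝ u (t • x)‖ ^ p := funext hnorm
    rw [this]
    exact (((integrable_comp_smul_iff volume
      (fun y : E3 => ‖fderiv ℝ u y‖ ^ p) ht.ne').2 hIg).const_mul _)
  · intro s hs
    rw [lpPow]
    simp_rw [habs s]
    rw [MeasureTheory.integral_const_mul]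
    rw [MeasureTheory.Measure.integral_comp_smul volume (fun y : E3 => |u y| ^ s) t]
    rw [hfin3, smul_eq_mul]
    rw [abs_of_pos (by positivity : (0:ℝ) < (t ^ (3:ℕ))⁻¹)]
    rw [show (t:ℝ) ^ (3:ℕ) = t ^ ((3:ℕ):ℝ) by rw [Real.rpow_natCast]]
    rw [← Real.rpow_mul ht.le, ← Real.rpow_neg ht.le]
    rw [lpPow, ← mul_assoc, ← Real.rpow_add ht]
    congr 2
    push_cast
    ring
  · rw [gradPow]
    simp_rw [hnorm]
    rw [MeasureTheory.integral_const_mul]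
    rw [MeasureTheory.Measure.integral_comp_smul volume (fun y : E3 => ‖fderiv ℝ u y‖ ^ p) t]
    rw [hfin3, smul_eq_mul]
    rw [abs_of_pos (by positivity : (0:ℝ) < (t ^ (3:ℕ))⁻¹)]
    rw [Real.mul_rpow htp.le ht.le, ← Real.rpow_mul ht.le]
    rw [show (t:ℝ) ^ (3:ℕ) = t ^ ((3:ℕ):ℝ) by rw [Real.rpow_natCast]]
    rw [← Real.rpow_neg ht.le]
    rw [gradPow, ← mul_assoc, ← Real.rpow_add ht]
    rw [← Real.rpow_add ht]
    congr 2
    push_cast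
    field_simp
    ring


theorem stmt9 (a b p q c : ℝ) (Q : E3 → ℝ) (ha : 0 < a) (hb : 0 < b)
    (hp1 : 3/2 < p) (hp2 : p < 3) (hq : q = p + 2*p^2/3)
    (hQ : Wmem p Q) (hQpos : 0 < lpPow p Q)
    (hGN : ∀ u : E3 → ℝ, Wmem p u →
      lpPow q u ≤ q / (p * ((lpPow p Q) ^ (1/p)) ^ (q-p)) *
        (gradPow p u) ^ (3*(q-p)/p^2) * (lpPow p u) ^ ((q - 3*(q-p)/p)/p))
    (hc0 : 0 < c)
    (hc : c ≤ (b * ((lpPow p Q) ^ (1/p)) ^ (2*p^2/3) / 2) ^ (3/(2*p^2 - 3*p))) :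
    (∀ u ∈ Sset p c, 0 ≤ Ifun a b p q u) ∧ ifun a b p q c = 0 ∧
    ¬ ∃ u ∈ Sset p c, Ifun a b p q u = 0 := by
  have hp0 : 0 < p := by linarith
  have hq0 : 0 < q := by rw [hq]; nlinarith
  have part1 : ∀ u ∈ Sset p c, 0 ≤ Ifun a b p q u := by
    intro u hu
    have hk := key_est hb hp1 hp2 hq hQpos hGN hc0 hc hu
    have hg := gradPow_nonneg p u
    have h1 : 0 ≤ a / p * gradPow p u := mul_nonneg (by positivity) hg
    unfold Ifun
    linarith
  refine ⟨part1, ?_, ?_⟩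
  · -- ifun = 0
    obtain ⟨u₁, hd1, hIs1, hIg1, hlp1⟩ := exists_base p hp0 c hc0
    have hmem1 : u₁ ∈ Sset p c := ⟨⟨hd1, hIs1 p hp0, hIg1⟩, hlp1⟩
    set g₁ : ℝ := gradPow p u₁ with hg₁
    set Lq : ℝ := lpPow q u₁ with hLq
    have hg₁0 : 0 ≤ g₁ := gradPow_nonneg p u₁
    have hLq0 : 0 ≤ Lq := lpPow_nonneg q u₁
    have hmem : ∀ t : ℝ, 0 < t → (fun x : E3 => t ^ (3/p) * u₁ (t • x)) ∈ Sset p c := by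
      intro t ht
      obtain ⟨hdu, hIsu, hIgu, hlpu, hgru⟩ := scaled_props p hp0 u₁ hd1 hIs1 hIg1 t ht
      refine ⟨⟨hdu, hIsu p hp0, hIgu⟩, ?_⟩
      rw [hlpu p hp0, hlp1, show 3*p/p - 3 = 0 by field_simp; ring, Real.rpow_zero, one_mul]
    have hIval : ∀ t : ℝ, 0 < t → Ifun a b p q (fun x : E3 => t ^ (3/p) * u₁ (t • x))
        ≤ (a/p*g₁) * t ^ p + (b/(2*p)*g₁^2) * t ^ (2*p) := by
      intro t ht
      obtain ⟨hdu, hIsu, hIgu, hlpu, hgru⟩ := scaled_props p hp0 u₁ hd1 hIs1 hIg1 t ht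
      have h2p : (t ^ p : ℝ) ^ 2 = t ^ (2*p) := by
        rw [sq, ← Real.rpow_add ht]; ring_nf
      have hlq : lpPow q (fun x : E3 => t ^ (3/p) * u₁ (t • x)) = t ^ (2*p) * Lq := by
        rw [hlpu q hq0, hLq]
        congr 2
        rw [hq]; field_simp; ring
      have hnonneg : 0 ≤ 1/q * (t ^ (2*p) * Lq) := by positivity
      unfold Ifun
      rw [hgru, hlq]
      rw [mul_pow, h2p]
      nlinarith [Real.rpow_pos_of_pos ht p, Real.rpow_pos_of_pos ht (2*p)]
    have hbdd : BddBelow (Ifun a b p q '' Sset p c) := by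
      refine ⟨0, ?_⟩
      rintro y ⟨u, hu, rfl⟩
      exact part1 u hu
    have hne : (Ifun a b p q '' Sset p c).Nonempty := ⟨_, ⟨u₁, hmem1, rfl⟩⟩
    have hlb : 0 ≤ ifun a b p q c := by
      refine le_csInf hne ?_
      rintro y ⟨u, hu, rfl⟩
      exact part1 u hu
    have htend : Tendsto (fun t : ℝ => (a/p*g₁) * t ^ p + (b/(2*p)*g₁^2) * t ^ (2*p))
        (nhdsWithin 0 (Ioi 0)) (nhds 0) := by
      have haux : ∀ r : ℝ, 0 < r → Tendsto (fun t : ℝ => t ^ r)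
          (nhdsWithin 0 (Ioi 0)) (nhds 0) := by
        intro r hr
        have hct : ContinuousAt (fun t : ℝ => t ^ r) 0 :=
          Real.continuousAt_rpow_const 0 r (Or.inr hr.le)
        have := hct.tendsto
        rw [Real.zero_rpow hr.ne'] at this
        exact this.mono_left nhdsWithin_le_nhds
      have h1 := (haux p hp0).const_mul (a/p*g₁)
      have h2 := (haux (2*p) (by linarith)).const_mul (b/(2*p)*g₁^2)
      have := h1.add h2
      simpa using this
    have hub : ∀ ε : ℝ, 0 < ε → ifun a b p q c < ε := by
      intro ε hε
      have hev : ∀ᶠ t in nhdsWithin (0:ℝ) (Ioi 0),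
          (a/p*g₁) * t ^ p + (b/(2*p)*g₁^2) * t ^ (2*p) < ε :=
        htend.eventually (gt_mem_nhds hε)
      have hself : ∀ᶠ t in nhdsWithin (0:ℝ) (Ioi 0), t ∈ Ioi (0:ℝ) :=
        self_mem_nhdsWithin
      obtain ⟨t, hφ, ht⟩ := (hev.and hself).exists
      have hle : ifun a b p q c ≤ Ifun a b p q (fun x : E3 => t ^ (3/p) * u₁ (t • x)) :=
        csInf_le hbdd ⟨_, hmem t ht, rfl⟩
      calc ifun a b p q c ≤ _ := hle
        _ ≤ (a/p*g₁) * t ^ p + (b/(2*p)*g₁^2) * t ^ (2*p) := hIval t ht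
        _ < ε := hφ
    by_contra hne0
    have hpos : 0 < ifun a b p q c := lt_of_le_of_ne hlb (Ne.symm hne0)
    exact absurd (hub _ hpos) (lt_irrefl _)
  · -- no minimizer
    rintro ⟨u, hu, hI⟩
    have hk := key_est hb hp1 hp2 hq hQpos hGN hc0 hc hu
    have hg0 := gradPow_nonneg p u
    have hap : 0 < a / p := div_pos ha hp0
    have hgz : gradPow p u = 0 := by
      have h1 : a / p * gradPow p u ≤ 0 := by
        unfold Ifun at hI
        linarith
      have hle : gradPow p u ≤ 0 := by
        by_contra hpos
        push_neg at hpos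
        nlinarith
      exact le_antisymm hle hg0
    have hae : ∀ᵐ x : E3, fderiv ℝ u x = 0 := by
      have h2 := (MeasureTheory.integral_eq_zero_iff_of_nonneg
        (fun x : E3 => Real.rpow_nonneg (norm_nonneg (fderiv ℝ u x)) p) hu.1.2.2).mp hgz
      filter_upwards [h2] with x hx
      have hx' : ‖fderiv ℝ u x‖ ^ p = 0 := hx
      have := (Real.rpow_eq_zero (norm_nonneg _) hp0.ne').1 hx'
      exact norm_eq_zero.1 this
    have htrans := line_const u hu.1.1 hae
    have hzero := vanish_of_trans u hp0 hu.1.1.continuous hu.1.2.1 htrans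
    have hlp0 : lpPow p u = 0 := by
      rw [lpPow]
      have : (fun x : E3 => |u x| ^ p) = fun _ => (0:ℝ) := by
        funext x
        rw [hzero x]
        simp [Real.zero_rpow hp0.ne']
      rw [this]
      simp
    have : (0:ℝ) < c ^ p := Real.rpow_pos_of_pos hc0 p
    rw [hu.2] at hlp0
    linarith
end
end

section
/- Subadditivity/strict scaling inequality: Let 3/2<p<3, p<q<p+2p^2/3 and suppose i(c) < 0 for some c>0. Then for any θ>1, i(θc) < θ^p i(c). Consequently, for any 0<α<c, i(c) < i(α) + i((c^p - α^p)^{1/p}). -/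
open MeasureTheory Real Set Filter

noncomputable section

/-! ### Auxiliary scaling machinery -/

def scaleFun (l m : ℝ) (u : E3 → ℝ) : E3 → ℝ := fun x => l * u (m • x)

lemma fderiv_scaleFun (u : E3 → ℝ) (hu : Differentiable ℝ u) (l m : ℝ) (x : E3) :
    fderiv ℝ (scaleFun l m u) x = (l * m) • (fderiv ℝ u (m • x)) := by
  have hinner : Differentiable ℝ (fun x : E3 => m • x) := (differentiable_id.const_smul m)
  have h1 : fderiv ℝ (fun x : E3 => m • x) x = m • (ContinuousLinearMap.id ℝ E3) := by
    rw [fderiv_fun_const_smul (f := fun y : E3 => y) differentiableAt_id, fderiv_id']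
  have hcomp : DifferentiableAt ℝ (fun x => u (m • x)) x :=
    (hu (m • x)).comp x (hinner x)
  have h2 : fderiv ℝ (fun x => u (m • x)) x
      = (fderiv ℝ u (m • x)).comp (fderiv ℝ (fun x : E3 => m • x) x) :=
    fderiv_comp x (hu (m • x)) (hinner x)
  calc fderiv ℝ (scaleFun l m u) x
      = l • fderiv ℝ (fun x => u (m • x)) x := fderiv_const_mul hcomp l
    _ = (l * m) • (fderiv ℝ u (m • x)) := by
        rw [h2, h1, ContinuousLinearMap.comp_smul, ContinuousLinearMap.comp_id, smul_smul]

lemma comp_smul_integral (f : E3 → ℝ) (m : ℝ) (hm : 0 < m) :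
    ∫ x : E3, f (m • x) = (m ^ 3)⁻¹ * ∫ x : E3, f x := by
  rw [MeasureTheory.Measure.integral_comp_smul_of_nonneg volume f m (hR := hm.le)]
  simp [smul_eq_mul]

lemma lpPow_scaleFun (u : E3 → ℝ) {l m : ℝ} (hl : 0 < l) (hm : 0 < m) (s : ℝ) :
    lpPow s (scaleFun l m u) = l ^ s * (m ^ 3)⁻¹ * lpPow s u := by
  unfold lpPow scaleFun
  have h1 : ∀ x : E3, |l * u (m • x)| ^ s = l ^ s * ((fun y => |u y| ^ s) (m • x)) := by
    intro x
    rw [abs_mul, abs_of_pos hl, Real.mul_rpow hl.le (abs_nonneg _)]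
  simp_rw [h1]
  have h2 : ∫ (x : E3), |u (m • x)| ^ s = (m ^ 3)⁻¹ * ∫ x : E3, |u x| ^ s :=
    comp_smul_integral (fun y => |u y| ^ s) m hm
  rw [MeasureTheory.integral_const_mul, h2]
  ring

lemma gradPow_scaleFun (u : E3 → ℝ) (hu : Differentiable ℝ u) {l m : ℝ} (hl : 0 < l)
    (hm : 0 < m) (p : ℝ) :
    gradPow p (scaleFun l m u) = (l * m) ^ p * (m ^ 3)⁻¹ * gradPow p u := by
  unfold gradPow
  have h1 : ∀ x : E3, ‖fderiv ℝ (scaleFun l m u) x‖ ^ p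
      = (l * m) ^ p * ((fun y => ‖fderiv ℝ u y‖ ^ p) (m • x)) := by
    intro x
    rw [fderiv_scaleFun u hu l m x, norm_smul, Real.norm_eq_abs,
      abs_of_pos (mul_pos hl hm), Real.mul_rpow (mul_pos hl hm).le (norm_nonneg _)]
  simp_rw [h1]
  have h2 : ∫ (x : E3), ‖fderiv ℝ u (m • x)‖ ^ p = (m ^ 3)⁻¹ * ∫ x : E3, ‖fderiv ℝ u x‖ ^ p :=
    comp_smul_integral (fun y => ‖fderiv ℝ u y‖ ^ p) m hm
  rw [MeasureTheory.integral_const_mul, h2]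
  ring

lemma wmem_scaleFun {p : ℝ} (u : E3 → ℝ) (hu : Wmem p u) {l m : ℝ} (hl : 0 < l) (hm : 0 < m) :
    Wmem p (scaleFun l m u) := by
  obtain ⟨hdiff, hint1, hint2⟩ := hu
  refine ⟨fun x => ((hdiff _).comp x ((differentiable_id.const_smul m) x)).const_mul l, ?_, ?_⟩
  · have h1 : ∀ x : E3, |scaleFun l m u x| ^ p
        = l ^ p * ((fun y => |u y| ^ p) (m • x)) := by
      intro x
      rw [show scaleFun l m u x = l * u (m • x) from rfl, abs_mul, abs_of_pos hl,
        Real.mul_rpow hl.le (abs_nonneg _)]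
    simp_rw [h1]
    exact (hint1.comp_smul hm.ne').const_mul _
  · have h1 : ∀ x : E3, ‖fderiv ℝ (scaleFun l m u) x‖ ^ p
        = (l * m) ^ p * ((fun y => ‖fderiv ℝ u y‖ ^ p) (m • x)) := by
      intro x
      rw [fderiv_scaleFun u hdiff l m x, norm_smul, Real.norm_eq_abs,
        abs_of_pos (mul_pos hl hm), Real.mul_rpow (mul_pos hl hm).le (norm_nonneg _)]
    simp_rw [h1]
    exact (hint2.comp_smul hm.ne').const_mul _

lemma rpow_one_div_rpow {x y : ℝ} (hx : 0 ≤ x) (hy : y ≠ 0) : (x ^ (1/y)) ^ y = x := by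
  rw [← Real.rpow_mul hx, one_div, inv_mul_cancel₀ hy, Real.rpow_one]

/-- The master scaling lemma. -/
lemma scaled (a b q : ℝ) {p s ρ μ : ℝ} (hp0 : 0 < p) {u : E3 → ℝ}
    (hs : 0 < s) (hρ : 0 < ρ) (hμ : 0 < μ) (hu : u ∈ Sset p s) :
    ∃ w ∈ Sset p (ρ * s), Ifun a b p q w =
      a / p * (ρ ^ p * μ ^ p) * gradPow p u
        + b / (2 * p) * (ρ ^ p * μ ^ p) ^ 2 * (gradPow p u) ^ 2
        - 1 / q * (ρ ^ q * μ ^ (3 * (q - p) / p)) * lpPow q u := by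
  obtain ⟨hw, hlp⟩ := hu
  set l : ℝ := ρ * μ ^ ((3:ℝ) / p) with hl_def
  have hl : 0 < l := mul_pos hρ (Real.rpow_pos_of_pos hμ _)
  have h3 : μ ^ ((3:ℕ) : ℝ) = μ ^ (3:ℕ) := Real.rpow_natCast μ 3
  have hμinv : ((μ : ℝ) ^ (3:ℕ))⁻¹ = μ ^ (-(3:ℝ)) := by
    rw [← h3, ← Real.rpow_neg hμ.le]; norm_num
  have hlp_pow : l ^ p = ρ ^ p * μ ^ (3:ℝ) := by
    rw [hl_def, Real.mul_rpow hρ.le (Real.rpow_pos_of_pos hμ _).le, ← Real.rpow_mul hμ.le]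
    rw [div_mul_cancel₀ _ hp0.ne']
  have hμadd : ∀ x y : ℝ, μ ^ x * μ ^ y = μ ^ (x + y) := fun x y => (Real.rpow_add hμ x y).symm
  have hgfac : (l * μ) ^ p * ((μ:ℝ) ^ (3:ℕ))⁻¹ = ρ ^ p * μ ^ p := by
    rw [Real.mul_rpow hl.le hμ.le, hlp_pow, hμinv]
    rw [mul_assoc, mul_assoc, hμadd, hμadd]
    norm_num
  have hlfac : l ^ q * ((μ:ℝ) ^ (3:ℕ))⁻¹ = ρ ^ q * μ ^ (3 * (q - p) / p) := by
    rw [hl_def, Real.mul_rpow hρ.le (Real.rpow_pos_of_pos hμ _).le, ← Real.rpow_mul hμ.le,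
      hμinv, mul_assoc, hμadd]
    congr 2
    field_simp
    ring
  have hmass : l ^ p * ((μ:ℝ) ^ (3:ℕ))⁻¹ * s ^ p = (ρ * s) ^ p := by
    rw [hlp_pow, hμinv, mul_assoc (ρ ^ p), hμadd]
    norm_num [Real.mul_rpow hρ.le hs.le]
  refine ⟨scaleFun l μ u, ⟨wmem_scaleFun u hw hl hμ, ?_⟩, ?_⟩
  · rw [lpPow_scaleFun u hl hμ p, hlp]
    exact hmass
  · unfold Ifun
    rw [gradPow_scaleFun u hw.1 hl hμ p, lpPow_scaleFun u hl hμ q]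
    rw [hgfac, hlfac]
    ring

/-- θ-type scaling: `μ = ρ^(-(p/3))`. -/
lemma scaled_theta (a b q : ℝ) {p s ρ : ℝ} (hp0 : 0 < p) {u : E3 → ℝ}
    (hs : 0 < s) (hρ : 0 < ρ) (hu : u ∈ Sset p s) :
    ∃ w ∈ Sset p (ρ * s), Ifun a b p q w =
      a / p * (ρ ^ (p - p * p / 3)) * gradPow p u
        + b / (2 * p) * (ρ ^ (p - p * p / 3)) ^ 2 * (gradPow p u) ^ 2
        - 1 / q * (ρ ^ p) * lpPow q u := by
  obtain ⟨w, hwmem, hwI⟩ := scaled a b q hp0 hs hρ (Real.rpow_pos_of_pos hρ (-(p/3))) hu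
  refine ⟨w, hwmem, ?_⟩
  rw [hwI]
  have h1 : ρ ^ p * (ρ ^ (-(p/3))) ^ p = ρ ^ (p - p * p / 3) := by
    rw [← Real.rpow_mul hρ.le, ← Real.rpow_add hρ]
    congr 1
    ring
  have h2 : ρ ^ q * (ρ ^ (-(p/3))) ^ (3 * (q - p) / p) = ρ ^ p := by
    rw [← Real.rpow_mul hρ.le, ← Real.rpow_add hρ]
    congr 1
    field_simp
    ring
  rw [h1, h2]

lemma quad_lb {B X Y : ℝ} (hB : 0 < B) : -(X^2/(4*B)) ≤ B*Y^2 - X*Y := by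
  have h4 : (0:ℝ) < 4*B := by linarith
  rw [← neg_div, div_le_iff₀ h4]
  nlinarith [sq_nonneg (2*B*Y - X)]

section Main

variable {a b p q c : ℝ}

/-- From `ifun a b p q c < 0` we get nonemptiness and bddBelow at mass `c`. -/
lemma ne_and_bdd (hneg : ifun a b p q c < 0) :
    (Sset p c).Nonempty ∧ BddBelow (Ifun a b p q '' Sset p c) := by
  constructor
  · by_contra h
    rw [Set.not_nonempty_iff_eq_empty] at h
    rw [ifun, h, Set.image_empty, Real.sInf_empty] at hneg
    exact lt_irrefl 0 hneg
  · by_contra h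
    rw [ifun, Real.sInf_of_not_bddBelow h] at hneg
    exact lt_irrefl 0 hneg

/-- Nonemptiness of every sphere. -/
lemma Sset_nonempty (hp0 : 0 < p) (hc : 0 < c)
    (hne : (Sset p c).Nonempty) {s : ℝ} (hs : 0 < s) : (Sset p s).Nonempty := by
  obtain ⟨u, hu⟩ := hne
  obtain ⟨w, hwmem, -⟩ := scaled (1:ℝ) 1 1 hp0 hc (div_pos hs hc) one_pos hu
  rw [div_mul_cancel₀ _ hc.ne'] at hwmem
  exact ⟨w, hwmem⟩

/-- Every energy image set is bounded below (transfer from mass `c`). -/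
lemma bdd_all (ha : 0 < a) (hb : 0 < b) (hc : 0 < c)
    (hp1 : 3/2 < p) (hp2 : p < 3) (hq1 : p < q) (hq2 : q < p + 2*p^2/3)
    (hbd : BddBelow (Ifun a b p q '' Sset p c)) {s : ℝ} (hs : 0 < s) :
    BddBelow (Ifun a b p q '' Sset p s) := by
  have hp0 : 0 < p := by linarith
  have hq0 : 0 < q := by linarith
  set σ : ℝ := 3 * (q - p) / p with hσ_def
  have hσpos : 0 < σ := by
    apply div_pos _ hp0
    linarith
  have hσlt : σ < 2*p := by
    rw [hσ_def, div_lt_iff₀ hp0]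
    nlinarith
  set ρ : ℝ := c / s with hρ_def
  have hρpos : 0 < ρ := div_pos hc hs
  set μ0 : ℝ := (ρ ^ (q - 2*p) / 2) ^ (1 / (2*p - σ)) with hμ0_def
  have hμ0pos : 0 < μ0 :=
    Real.rpow_pos_of_pos (by positivity) _
  set g : ℝ := ρ ^ p * μ0 ^ p with hg_def
  set lf : ℝ := ρ ^ q * μ0 ^ σ with hlf_def
  have hgpos : 0 < g := mul_pos (Real.rpow_pos_of_pos hρpos _) (Real.rpow_pos_of_pos hμ0pos _)
  have hlfpos : 0 < lf := mul_pos (Real.rpow_pos_of_pos hρpos _) (Real.rpow_pos_of_pos hμ0pos _)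
  have hkey : g ^ 2 = lf / 2 := by
    have hμ0exp : μ0 ^ (2*p - σ) = ρ ^ (q - 2*p) / 2 :=
      rpow_one_div_rpow (by positivity) (by linarith)
    have e1 : g ^ 2 = ρ ^ (2*p) * μ0 ^ (2*p) := by
      rw [hg_def, mul_pow, ← Real.rpow_natCast (ρ ^ p) 2, ← Real.rpow_natCast (μ0 ^ p) 2,
        ← Real.rpow_mul hρpos.le, ← Real.rpow_mul hμ0pos.le]
      norm_num
      rw [mul_comm p 2]
    have e2 : μ0 ^ (2*p) = μ0 ^ (2*p - σ) * μ0 ^ σ := by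
      rw [← Real.rpow_add hμ0pos]
      congr 1
      ring
    rw [e1, e2, hμ0exp]
    rw [show ρ ^ (2*p) * (ρ ^ (q - 2*p) / 2 * μ0 ^ σ) = (ρ ^ (2*p) * ρ ^ (q - 2*p)) * μ0 ^ σ / 2
      by ring, ← Real.rpow_add hρpos, show 2*p + (q - 2*p) = q by ring, hlf_def]
  set ic : ℝ := ifun a b p q c with hic_def
  set M : ℝ := ic / lf - ((a/p) * (g/lf - 1))^2 / (4 * (b/(4*p))) with hM_def
  refine ⟨M, ?_⟩
  rintro x ⟨u, hu, rfl⟩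
  obtain ⟨w, hwmem, hwI⟩ := scaled a b q hp0 hs hρpos hμ0pos hu
  rw [show ρ * s = c by rw [hρ_def]; field_simp] at hwmem
  have H1 : ic ≤ Ifun a b p q w := csInf_le hbd ⟨w, hwmem, rfl⟩
  rw [hwI] at H1
  rw [← hσ_def, ← hlf_def, ← hg_def] at H1
  set G : ℝ := gradPow p u with hG_def
  set L : ℝ := lpPow q u with hL_def
  have hGpos : 0 ≤ G := gradPow_nonneg p u
  have hLpos : 0 ≤ L := lpPow_nonneg q u
  -- H1 : ic ≤ a/p * g * G + b/(2p) * g^2 * G^2 - 1/q * lf * L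
  rw [hkey] at H1
  have hstep : 1/q * L ≤ a/p * (g/lf) * G + b/(4*p) * G^2 - ic/lf := by
    rw [← mul_le_mul_iff_left₀ hlfpos]
    have hexp : (a/p * (g/lf) * G + b/(4*p) * G^2 - ic/lf) * lf
        = a/p * g * G + b/(2*p) * (lf/2) * G^2 - ic := by
      field_simp
      ring
    rw [hexp]
    linarith [H1]
  have hquad : -(((a/p) * (g/lf - 1))^2 / (4 * (b/(4*p))))
      ≤ (b/(4*p)) * G^2 - ((a/p) * (g/lf - 1)) * G := quad_lb (by positivity)
  show M ≤ Ifun a b p q u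
  unfold Ifun
  rw [← hG_def, ← hL_def]
  rw [hM_def]
  have hP : b/(2*p) = 2*(b/(4*p)) := by ring
  rw [hP]
  linarith [hstep, hquad]

/-- The infimum is nonpositive at every mass. -/
lemma ifun_nonpos (ha : 0 < a) (hb : 0 < b) (hc : 0 < c)
    (hp1 : 3/2 < p) (hp2 : p < 3) (hq1 : p < q) (hq2 : q < p + 2*p^2/3)
    (hneg : ifun a b p q c < 0) {s : ℝ} (hs : 0 < s) : ifun a b p q s ≤ 0 := by
  have hp0 : 0 < p := by linarith
  have hq0 : 0 < q := by linarith
  obtain ⟨hne, hbd⟩ := ne_and_bdd hneg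
  have hbds := bdd_all ha hb hc hp1 hp2 hq1 hq2 hbd hs
  obtain ⟨u, hu⟩ := Sset_nonempty hp0 hc hne hs
  set G : ℝ := gradPow p u with hG_def
  set L : ℝ := lpPow q u with hL_def
  have hGpos : 0 ≤ G := gradPow_nonneg p u
  have hLpos : 0 ≤ L := lpPow_nonneg q u
  by_contra hcon
  push_neg at hcon
  set ε : ℝ := ifun a b p q s with hε_def
  set C : ℝ := a/p * G + b/(2*p) * G^2 with hC_def
  have hCpos : 0 ≤ C := by positivity
  have hC1 : 0 < C + 1 := by linarith
  set t : ℝ := min 1 ((ε/(C+1)) ^ (1/p)) with ht_def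
  have htpos : 0 < t := lt_min one_pos (Real.rpow_pos_of_pos (by positivity) _)
  have ht1 : t ≤ 1 := min_le_left _ _
  have htp_le : t ^ p ≤ ε/(C+1) := by
    calc t ^ p ≤ ((ε/(C+1)) ^ (1/p)) ^ p :=
          Real.rpow_le_rpow htpos.le (min_le_right _ _) hp0.le
    _ = ε/(C+1) := rpow_one_div_rpow (by positivity) hp0.ne'
  have htp1 : t ^ p ≤ 1 := Real.rpow_le_one htpos.le ht1 hp0.le
  have htppos : 0 < t ^ p := Real.rpow_pos_of_pos htpos p
  obtain ⟨w, hwmem, hwI⟩ := scaled a b q hp0 hs one_pos htpos hu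
  rw [one_mul] at hwmem
  simp only [Real.one_rpow, one_mul] at hwI
  have hsq : (t ^ p)^2 ≤ t ^ p := by nlinarith
  have h1 : b/(2*p) * (t^p)^2 * G^2 ≤ b/(2*p) * (t^p) * G^2 := by
    apply mul_le_mul_of_nonneg_right _ (sq_nonneg G)
    apply mul_le_mul_of_nonneg_left hsq (by positivity)
  have h2 : 0 ≤ 1/q * (t ^ (3*(q-p)/p)) * L := by positivity
  have h3 : a/p * (t^p) * G + b/(2*p) * (t^p) * G^2 = C * t^p := by rw [hC_def]; ring
  have h4 : C * t^p ≤ C * (ε/(C+1)) := mul_le_mul_of_nonneg_left htp_le hCpos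
  have h5 : C * (ε/(C+1)) < ε := by
    rw [mul_div_assoc', div_lt_iff₀ hC1]
    nlinarith
  have hlt : Ifun a b p q w < ε := by
    rw [hwI]
    linarith
  have hge : ε ≤ Ifun a b p q w := csInf_le hbds ⟨w, hwmem, rfl⟩
  linarith

/-- Nonstrict scaling inequality. -/
lemma ifun_scale_le (ha : 0 < a) (hb : 0 < b) (hc : 0 < c)
    (hp1 : 3/2 < p) (hp2 : p < 3) (hq1 : p < q) (hq2 : q < p + 2*p^2/3)
    (hneg : ifun a b p q c < 0) {s ρ : ℝ} (hs : 0 < s) (hρ : 1 ≤ ρ) :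
    ifun a b p q (ρ*s) ≤ ρ^p * ifun a b p q s := by
  have hp0 : 0 < p := by linarith
  have hq0 : 0 < q := by linarith
  have hρ0 : 0 < ρ := by linarith
  obtain ⟨hne, hbd⟩ := ne_and_bdd hneg
  have hbds := bdd_all ha hb hc hp1 hp2 hq1 hq2 hbd hs
  have hbdρs := bdd_all ha hb hc hp1 hp2 hq1 hq2 hbd (mul_pos hρ0 hs)
  have hnes : (Sset p s).Nonempty := Sset_nonempty hp0 hc hne hs
  have hneIs : (Ifun a b p q '' Sset p s).Nonempty := hnes.image _
  have hρp : 0 < ρ^p := Real.rpow_pos_of_pos hρ0 p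
  have key : ∀ ε > 0, ifun a b p q (ρ*s) ≤ ρ^p * ifun a b p q s + ε := by
    intro ε hε
    have hlt : ifun a b p q s < ifun a b p q s + ε/ρ^p := by
      have := div_pos hε hρp
      linarith
    obtain ⟨x, ⟨u, hu, rfl⟩, hxlt⟩ := (csInf_lt_iff hbds hneIs).mp hlt
    obtain ⟨w, hwmem, hwI⟩ := scaled_theta a b q hp0 hs hρ0 hu
    have e1 : ρ ^ (p - p*p/3) ≤ ρ^p := Real.rpow_le_rpow_of_exponent_le hρ (by nlinarith)
    have e2 : (ρ ^ (p - p*p/3))^2 ≤ ρ^p := by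
      rw [← Real.rpow_natCast (ρ ^ (p - p*p/3)) 2, ← Real.rpow_mul hρ0.le]
      apply Real.rpow_le_rpow_of_exponent_le hρ
      push_cast
      nlinarith
    have hGpos : 0 ≤ gradPow p u := gradPow_nonneg p u
    have hLpos : 0 ≤ lpPow q u := lpPow_nonneg q u
    have hIw : Ifun a b p q w ≤ ρ^p * Ifun a b p q u := by
      rw [hwI, Ifun]
      have t1 : a/p * ρ^(p - p*p/3) * gradPow p u ≤ a/p * ρ^p * gradPow p u := by
        apply mul_le_mul_of_nonneg_right _ hGpos
        exact mul_le_mul_of_nonneg_left e1 (by positivity)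
      have t2 : b/(2*p) * (ρ^(p - p*p/3))^2 * (gradPow p u)^2
          ≤ b/(2*p) * ρ^p * (gradPow p u)^2 := by
        apply mul_le_mul_of_nonneg_right _ (sq_nonneg _)
        exact mul_le_mul_of_nonneg_left e2 (by positivity)
      linarith [t1, t2]
    have h0 : ifun a b p q (ρ*s) ≤ Ifun a b p q w := csInf_le hbdρs ⟨w, hwmem, rfl⟩
    have h1 : ρ^p * Ifun a b p q u ≤ ρ^p * (ifun a b p q s + ε/ρ^p) :=
      mul_le_mul_of_nonneg_left hxlt.le hρp.le
    have h2 : ρ^p * (ifun a b p q s + ε/ρ^p) = ρ^p * ifun a b p q s + ε := by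
      field_simp
    linarith
  by_contra hcon
  push_neg at hcon
  have := key ((ifun a b p q (ρ*s) - ρ^p * ifun a b p q s)/2) (by linarith)
  linarith

/-- Strict scaling inequality. -/
lemma ifun_scale_lt (ha : 0 < a) (hb : 0 < b) (hc : 0 < c)
    (hp1 : 3/2 < p) (hp2 : p < 3) (hq1 : p < q) (hq2 : q < p + 2*p^2/3)
    (hneg : ifun a b p q c < 0) {s θ : ℝ} (hs : 0 < s)
    (hsneg : ifun a b p q s < 0) (hθ : 1 < θ) :
    ifun a b p q (θ*s) < θ^p * ifun a b p q s := by
  have hp0 : 0 < p := by linarith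
  have hq0 : 0 < q := by linarith
  have hθ0 : 0 < θ := by linarith
  obtain ⟨hne, hbd⟩ := ne_and_bdd hneg
  have hbds := bdd_all ha hb hc hp1 hp2 hq1 hq2 hbd hs
  have hbdθs := bdd_all ha hb hc hp1 hp2 hq1 hq2 hbd (mul_pos hθ0 hs)
  have hnes : (Sset p s).Nonempty := Sset_nonempty hp0 hc hne hs
  have hneIs : (Ifun a b p q '' Sset p s).Nonempty := hnes.image _
  set m : ℝ := -ifun a b p q s with hm_def
  have hm : 0 < m := by rw [hm_def]; linarith
  set σ : ℝ := 3*(q-p)/p with hσ_def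
  have hσpos : 0 < σ := div_pos (by linarith) hp0
  set T : ℝ := (4:ℝ) ^ (1/σ) with hT_def
  have hTpos : 0 < T := Real.rpow_pos_of_pos (by norm_num) _
  have hTσ : T ^ σ = 4 := rpow_one_div_rpow (by norm_num) hσpos.ne'
  have hTp : 0 < T^p := Real.rpow_pos_of_pos hTpos p
  set D1 : ℝ := a/p * T^p with hD1_def
  set D2 : ℝ := b/(2*p) * (T^p)^2 with hD2_def
  have hD1pos : 0 < D1 := by positivity
  have hD2pos : 0 < D2 := by positivity
  set g0 : ℝ := min 1 (m/(D1+D2)) with hg0_def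
  have hg0pos : 0 < g0 := lt_min one_pos (div_pos hm (by positivity))
  have claim : ∀ u ∈ Sset p s, Ifun a b p q u ≤ -(m/2) → g0 ≤ gradPow p u := by
    intro u hu hIu
    have hGpos : 0 ≤ gradPow p u := gradPow_nonneg p u
    have hLpos : 0 ≤ lpPow q u := lpPow_nonneg q u
    obtain ⟨w, hwmem, hwI⟩ := scaled a b q hp0 hs one_pos hTpos hu
    rw [one_mul] at hwmem
    simp only [Real.one_rpow, one_mul] at hwI
    have hIs : ifun a b p q s ≤ Ifun a b p q w := csInf_le hbds ⟨w, hwmem, rfl⟩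
    rw [hwI, ← hσ_def, hTσ] at hIs
    rw [Ifun] at hIu
    have hIs' : -m ≤ a/p * T^p * gradPow p u + b/(2*p) * (T^p)^2 * (gradPow p u)^2
        - 1/q * 4 * lpPow q u := by
      rw [hm_def]; linarith
    have hq4 : a/p * gradPow p u + b/(2*p) * (gradPow p u)^2 + m/2 ≤ 1/q * lpPow q u := by
      linarith
    have hmain : m ≤ D1 * gradPow p u + D2 * (gradPow p u)^2 := by
      have hga : 0 ≤ a/p * gradPow p u := by positivity
      have hgb : 0 ≤ b/(2*p) * (gradPow p u)^2 := by positivity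
      rw [hD1_def, hD2_def]
      linarith
    by_cases hG1 : 1 ≤ gradPow p u
    · exact le_trans (min_le_left _ _) hG1
    · push_neg at hG1
      have hGsq : (gradPow p u)^2 ≤ gradPow p u := by
        rw [sq]
        exact mul_le_of_le_one_right hGpos hG1.le
      have h6 : m ≤ (D1 + D2) * gradPow p u := by
        have := mul_le_mul_of_nonneg_left hGsq hD2pos.le
        have hexp : (D1 + D2) * gradPow p u = D1 * gradPow p u + D2 * gradPow p u := by ring
        linarith
      have h7 : m/(D1+D2) ≤ gradPow p u := by
        rw [div_le_iff₀ (by positivity)]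
        linarith
      exact le_trans (min_le_right _ _) h7
  set e : ℝ := p - p*p/3 with he_def
  have heltp : e < p := by rw [he_def]; nlinarith
  have hθe_lt : θ^e < θ^p := Real.rpow_lt_rpow_of_exponent_lt hθ heltp
  have hθe2 : (θ^e)^2 ≤ θ^p := by
    rw [← Real.rpow_natCast (θ^e) 2, ← Real.rpow_mul hθ0.le]
    apply Real.rpow_le_rpow_of_exponent_le hθ.le
    push_cast
    rw [he_def]
    nlinarith
  have hθp : 0 < θ^p := Real.rpow_pos_of_pos hθ0 p
  set δ : ℝ := a/p * (θ^p - θ^e) * g0 with hδ_def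
  have hδpos : 0 < δ :=
    mul_pos (mul_pos (div_pos ha hp0) (sub_pos.mpr hθe_lt)) hg0pos
  set ε : ℝ := min (m/2) (δ/(2*θ^p)) with hε_def
  have hεpos : 0 < ε := lt_min (by linarith) (by positivity)
  have hlt : ifun a b p q s < ifun a b p q s + ε := by linarith
  obtain ⟨x, ⟨u, hu, rfl⟩, hxlt⟩ := (csInf_lt_iff hbds hneIs).mp hlt
  have hIu_le : Ifun a b p q u ≤ -(m/2) := by
    have h1 : ε ≤ m/2 := min_le_left _ _
    have h2 : ifun a b p q s = -m := by rw [hm_def]; ring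
    linarith
  have hG0 : g0 ≤ gradPow p u := claim u hu hIu_le
  have hGpos : 0 ≤ gradPow p u := gradPow_nonneg p u
  obtain ⟨w, hwmem, hwI⟩ := scaled_theta a b q hp0 hs hθ0 hu
  rw [← he_def] at hwI
  have h0 : ifun a b p q (θ*s) ≤ Ifun a b p q w := csInf_le hbdθs ⟨w, hwmem, rfl⟩
  have hIw : Ifun a b p q w ≤ θ^p * Ifun a b p q u - δ := by
    rw [hwI, Ifun]
    have t2 : b/(2*p) * (θ^e)^2 * (gradPow p u)^2 ≤ b/(2*p) * θ^p * (gradPow p u)^2 := by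
      apply mul_le_mul_of_nonneg_right _ (sq_nonneg _)
      exact mul_le_mul_of_nonneg_left hθe2 (by positivity)
    have t1 : a/p * (θ^p - θ^e) * g0 ≤ a/p * (θ^p - θ^e) * gradPow p u := by
      apply mul_le_mul_of_nonneg_left hG0
      have : 0 ≤ θ^p - θ^e := by linarith
      positivity
    rw [hδ_def]
    linarith [t1, t2]
  have hmul : θ^p * Ifun a b p q u < θ^p * (ifun a b p q s + ε) :=
    (mul_lt_mul_iff_right₀ hθp).mpr hxlt
  have hεb : θ^p * ε ≤ δ/2 := by
    have h1 : ε ≤ δ/(2*θ^p) := min_le_right _ _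
    have h2 : θ^p * (δ/(2*θ^p)) = δ/2 := by
      field_simp
    calc θ^p * ε ≤ θ^p * (δ/(2*θ^p)) := mul_le_mul_of_nonneg_left h1 hθp.le
    _ = δ/2 := h2
  have hexpand : θ^p * (ifun a b p q s + ε) = θ^p * ifun a b p q s + θ^p * ε := by ring
  linarith

end Main

theorem stmt10 (a b p q c : ℝ) (ha : 0 < a) (hb : 0 < b) (hc : 0 < c)
    (hp1 : 3/2 < p) (hp2 : p < 3) (hq1 : p < q) (hq2 : q < p + 2*p^2/3)
    (hneg : ifun a b p q c < 0) :
    (∀ θ : ℝ, 1 < θ → ifun a b p q (θ*c) < θ^p * ifun a b p q c) ∧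
    (∀ α : ℝ, 0 < α → α < c →
      ifun a b p q c < ifun a b p q α + ifun a b p q ((c^p - α^p) ^ (1/p))) := by
  have hp0 : 0 < p := by linarith
  constructor
  · intro θ hθ
    exact ifun_scale_lt ha hb hc hp1 hp2 hq1 hq2 hneg hc hneg hθ
  · intro α hα hαc
    set β : ℝ := (c^p - α^p) ^ (1/p) with hβ_def
    have hαp : α^p < c^p := Real.rpow_lt_rpow hα.le hαc hp0
    have hd : 0 < c^p - α^p := by linarith
    have hβ0 : 0 < β := Real.rpow_pos_of_pos hd _
    have hβp : β^p = c^p - α^p := rpow_one_div_rpow hd.le hp0.ne'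
    have hαp0 : 0 < α^p := Real.rpow_pos_of_pos hα p
    have hβp0 : 0 < β^p := Real.rpow_pos_of_pos hβ0 p
    have hβc : β < c := by
      by_contra hcon
      push_neg at hcon
      have : c^p ≤ β^p := Real.rpow_le_rpow hc.le hcon hp0.le
      linarith
    have hiα_le : ifun a b p q α ≤ 0 := ifun_nonpos ha hb hc hp1 hp2 hq1 hq2 hneg hα
    have hiβ_le : ifun a b p q β ≤ 0 := ifun_nonpos ha hb hc hp1 hp2 hq1 hq2 hneg hβ0
    have hcs : c^p = α^p + β^p := by linarith
    by_cases hiα : ifun a b p q α < 0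
    · by_cases hiβ : ifun a b p q β < 0
      · rcases le_total α β with hab | hab
        · -- base β
          have hθ1 : 1 < c/β := (one_lt_div hβ0).mpr hβc
          have h1 : ifun a b p q c < (c/β)^p * ifun a b p q β := by
            have := ifun_scale_lt ha hb hc hp1 hp2 hq1 hq2 hneg hβ0 hiβ hθ1
            rwa [div_mul_cancel₀ _ hβ0.ne'] at this
          have hρ1 : 1 ≤ β/α := (one_le_div hα).mpr hab
          have h2 : ifun a b p q β ≤ (β/α)^p * ifun a b p q α := by
            have := ifun_scale_le ha hb hc hp1 hp2 hq1 hq2 hneg hα hρ1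
            rwa [div_mul_cancel₀ _ hα.ne'] at this
          rw [Real.div_rpow hc.le hβ0.le] at h1
          rw [Real.div_rpow hβ0.le hα.le] at h2
          have key1 : c^p/β^p * ifun a b p q β
              = ifun a b p q β + α^p/β^p * ifun a b p q β := by
            rw [hcs]
            field_simp
            ring
          have key2 : α^p/β^p * ifun a b p q β ≤ ifun a b p q α := by
            have hk := mul_le_mul_of_nonneg_left h2 (div_pos hαp0 hβp0).le
            have heq : α^p/β^p * (β^p/α^p * ifun a b p q α) = ifun a b p q α := by
              field_simp
            linarith
          linarith
        · -- base α
          have hθ1 : 1 < c/α := (one_lt_div hα).mpr hαc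
          have h1 : ifun a b p q c < (c/α)^p * ifun a b p q α := by
            have := ifun_scale_lt ha hb hc hp1 hp2 hq1 hq2 hneg hα hiα hθ1
            rwa [div_mul_cancel₀ _ hα.ne'] at this
          have hρ1 : 1 ≤ α/β := (one_le_div hβ0).mpr hab
          have h2 : ifun a b p q α ≤ (α/β)^p * ifun a b p q β := by
            have := ifun_scale_le ha hb hc hp1 hp2 hq1 hq2 hneg hβ0 hρ1
            rwa [div_mul_cancel₀ _ hβ0.ne'] at this
          rw [Real.div_rpow hc.le hα.le] at h1
          rw [Real.div_rpow hα.le hβ0.le] at h2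
          have key1 : c^p/α^p * ifun a b p q α
              = ifun a b p q α + β^p/α^p * ifun a b p q α := by
            rw [hcs]
            field_simp
          have key2 : β^p/α^p * ifun a b p q α ≤ ifun a b p q β := by
            have hk := mul_le_mul_of_nonneg_left h2 (div_pos hβp0 hαp0).le
            have heq : β^p/α^p * (α^p/β^p * ifun a b p q β) = ifun a b p q β := by
              field_simp
            linarith
          linarith
      · -- ifun β = 0
        have hβz : ifun a b p q β = 0 := le_antisymm hiβ_le (not_lt.mp hiβ)
        have hθ1 : 1 < c/α := (one_lt_div hα).mpr hαc
        have h1 : ifun a b p q c < (c/α)^p * ifun a b p q α := by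
          have := ifun_scale_lt ha hb hc hp1 hp2 hq1 hq2 hneg hα hiα hθ1
          rwa [div_mul_cancel₀ _ hα.ne'] at this
        have hgt1 : 1 < (c/α)^p :=
          (Real.one_lt_rpow_iff_of_pos (div_pos hc hα)).mpr (Or.inl ⟨hθ1, hp0⟩)
        have h3 : (c/α)^p * ifun a b p q α < ifun a b p q α := by
          nlinarith
        rw [hβz]
        linarith
    · have hαz : ifun a b p q α = 0 := le_antisymm hiα_le (not_lt.mp hiα)
      by_cases hiβ : ifun a b p q β < 0
      · have hθ1 : 1 < c/β := (one_lt_div hβ0).mpr hβc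
        have h1 : ifun a b p q c < (c/β)^p * ifun a b p q β := by
          have := ifun_scale_lt ha hb hc hp1 hp2 hq1 hq2 hneg hβ0 hiβ hθ1
          rwa [div_mul_cancel₀ _ hβ0.ne'] at this
        have hgt1 : 1 < (c/β)^p :=
          (Real.one_lt_rpow_iff_of_pos (div_pos hc hβ0)).mpr (Or.inl ⟨hθ1, hp0⟩)
        have h3 : (c/β)^p * ifun a b p q β < ifun a b p q β := by
          nlinarith
        rw [hαz]
        linarith
      · have hβz : ifun a b p q β = 0 := le_antisymm hiβ_le (not_lt.mp hiβ)
        rw [hαz, hβz]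
        linarith

end
end
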